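/- arXiv:1207.2238 — 10 statements merged into one kernel-verified Lean document; each statement's English description precedes it below -/
import Mathlib

section
/- If f, g : [0,∞) → (0,∞) both tend to +∞ at infinity and the function W(f(x)) − W(g(x)) is bounded above on [0,∞), then limsup_{x→∞} f(x)/g(x) ≤ 1. -/
open Filter MeasureTheory

/-- If `f, g` are positive, tend to `+∞`, and `W(f(x)) − W(g(x))` is bounded above
on `[0,∞)`, then `limsup f(x)/g(x) ≤ 1`. -/
theorem bddAbove_W_diff_implies_limsup_le_one
(w ℓ W : ℝ → ℝ)
    (hw_cont : ContinuousOn w (Set.Ici 0))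
    (hw_pos : ∀ x, 0 ≤ x → 0 < w x)
    (hw_mono : MonotoneOn w (Set.Ici 0))
    (hwl : ∀ x, 0 < x → w x = x / ℓ x)
    (hl_slow : ∀ c, 0 < c → Tendsto (fun x => ℓ (c * x) / ℓ x) atTop (nhds 1))
    (hl_inf : Tendsto ℓ atTop atTop)
    (hW : ∀ x, W x = ∫ u in (0:ℝ)..x, 1 / w u)
    (f g : ℝ → ℝ)
    (hf_pos : ∀ x, 0 ≤ x → 0 < f x) (hg_pos : ∀ x, 0 ≤ x → 0 < g x)
    (hf_inf : Tendsto f atTop atTop) (hg_inf : Tendsto g atTop atTop)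
    (hbdd : ∃ C : ℝ, ∀ x, 0 ≤ x → W (f x) - W (g x) ≤ C) :
    limsup (fun x => f x / g x) atTop ≤ 1 := by
  -- integrability of 1/w on [a,b] ⊆ [0,∞)
  have hint : ∀ a b : ℝ, 0 ≤ a → a ≤ b →
      IntervalIntegrable (fun u => 1 / w u) volume a b := by
    intro a b ha hab
    apply ContinuousOn.intervalIntegrable
    rw [Set.uIcc_of_le hab]
    have hsub : Set.Icc a b ⊆ Set.Ici 0 := fun u hu => le_trans ha hu.1
    exact continuousOn_const.div (hw_cont.mono hsub)
      (fun u hu => (hw_pos u (hsub hu)).ne')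
  -- W b - W a as an interval integral
  have hWdiff : ∀ a b : ℝ, 0 ≤ a → a ≤ b →
      W b - W a = ∫ u in a..b, 1 / w u := by
    intro a b ha hab
    rw [hW, hW,
      ← intervalIntegral.integral_add_adjacent_intervals (hint 0 a le_rfl ha)
        (hint a b ha hab)]
    ring
  -- monotonicity of W
  have hWmono : ∀ a b : ℝ, 0 ≤ a → a ≤ b → 0 ≤ W b - W a := by
    intro a b ha hab
    rw [hWdiff a b ha hab]
    apply intervalIntegral.integral_nonneg hab
    intro u hu
    exact (one_div_pos.mpr (hw_pos u (le_trans ha hu.1))).le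
  -- lower bound
  have hlow : ∀ a b : ℝ, 0 ≤ a → a ≤ b → (b - a) / w b ≤ W b - W a := by
    intro a b ha hab
    rw [hWdiff a b ha hab]
    have hb : (0:ℝ) ≤ b := le_trans ha hab
    calc (b - a) / w b = ∫ _ in a..b, 1 / w b := by
          rw [intervalIntegral.integral_const, smul_eq_mul]; ring
      _ ≤ ∫ u in a..b, 1 / w u := by
          apply intervalIntegral.integral_mono_on hab intervalIntegrable_const
            (hint a b ha hab)
          intro u hu
          have hu0 : (0:ℝ) ≤ u := le_trans ha hu.1
          exact one_div_le_one_div_of_le (hw_pos u hu0)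
            (hw_mono hu0 hb hu.2)
  obtain ⟨C, hC⟩ := hbdd
  -- key: for every l > 1, eventually f x ≤ l * g x
  have key : ∀ l : ℝ, 1 < l → ∀ᶠ x in atTop, f x / g x ≤ l := by
    intro l hl
    have hl0 : 0 < l := by linarith
    have hlg : Tendsto (fun x => ℓ (l * g x)) atTop atTop :=
      hl_inf.comp (hg_inf.const_mul_atTop hl0)
    filter_upwards [eventually_ge_atTop (0:ℝ),
      hlg.eventually_gt_atTop (C * l / (l - 1))] with x hx hLx
    have hgx : 0 < g x := hg_pos x hx
    have hlg0 : 0 < l * g x := by positivity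
    have hL0 : 0 < ℓ (l * g x) := by
      have hww := hw_pos (l * g x) hlg0.le
      rw [hwl (l * g x) hlg0] at hww
      rcases div_pos_iff.mp hww with ⟨_, h⟩ | ⟨h, _⟩
      · exact h
      · linarith
    rw [div_le_iff₀ hgx]
    by_contra hcon
    push_neg at hcon
    have h1 : 0 ≤ W (f x) - W (l * g x) :=
      hWmono (l * g x) (f x) hlg0.le hcon.le
    have h2 : (l * g x - g x) / w (l * g x) ≤ W (l * g x) - W (g x) :=
      hlow (g x) (l * g x) hgx.le (by nlinarith)
    have h3 : (l * g x - g x) / w (l * g x) = (l - 1) / l * ℓ (l * g x) := by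
      rw [hwl (l * g x) hlg0]
      field_simp
    have h4 : C < (l - 1) / l * ℓ (l * g x) := by
      rw [div_mul_eq_mul_div, lt_div_iff₀ hl0]
      calc C * l = C * l / (l - 1) * (l - 1) := by
            rw [div_mul_cancel₀ _ (by linarith : l - 1 ≠ 0)]
        _ < ℓ (l * g x) * (l - 1) := by
            apply mul_lt_mul_of_pos_right hLx (by linarith)
        _ = (l - 1) * ℓ (l * g x) := by ring
    have := hC x hx
    nlinarith
  -- conclude
  have hcob : IsCoboundedUnder (· ≤ ·) atTop (fun x => f x / g x) := by
    apply isCoboundedUnder_le_of_eventually_le atTop (x := 0)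
    filter_upwards [eventually_ge_atTop (0:ℝ)] with x hx
    exact (div_pos (hf_pos x hx) (hg_pos x hx)).le
  apply le_of_forall_gt_imp_ge_of_dense
  intro l hl
  exact limsup_le_of_le hcob (key l hl)
end

section
/- If f, g : [0,∞) → (0,∞) both tend to +∞ at infinity and |W(f(x)) − W(g(x))| is bounded on [0,∞), then f(x)/g(x) → 1 as x → ∞. -/
open Filter MeasureTheory

/-- If `f, g` are positive, tend to `+∞`, and `|W(f(x)) − W(g(x))|` is bounded
on `[0,∞)`, then `f(x)/g(x) → 1` as `x → ∞`. -/
theorem bdd_W_diff_implies_ratio_tendsto_one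
(w ℓ W : ℝ → ℝ)
    (hw_cont : ContinuousOn w (Set.Ici 0))
    (hw_pos : ∀ x, 0 ≤ x → 0 < w x)
    (hw_mono : MonotoneOn w (Set.Ici 0))
    (hwl : ∀ x, 0 < x → w x = x / ℓ x)
    (hl_slow : ∀ c, 0 < c → Tendsto (fun x => ℓ (c * x) / ℓ x) atTop (nhds 1))
    (hl_inf : Tendsto ℓ atTop atTop)
    (hW : ∀ x, W x = ∫ u in (0:ℝ)..x, 1 / w u)
    (f g : ℝ → ℝ)
    (hf_pos : ∀ x, 0 ≤ x → 0 < f x) (hg_pos : ∀ x, 0 ≤ x → 0 < g x)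
    (hf_inf : Tendsto f atTop atTop) (hg_inf : Tendsto g atTop atTop)
    (hbdd : ∃ C : ℝ, ∀ x, 0 ≤ x → |W (f x) - W (g x)| ≤ C) :
    Tendsto (fun x => f x / g x) atTop (nhds 1) := by
  obtain ⟨C, hC⟩ := hbdd
  -- continuity and integrability of 1/w on [0,∞)
  have hcont : ContinuousOn (fun u => 1 / w u) (Set.Ici 0) :=
    continuousOn_const.div hw_cont (fun x hx => (hw_pos x hx).ne')
  have hInt : ∀ a b : ℝ, 0 ≤ a → 0 ≤ b →
      IntervalIntegrable (fun u => 1 / w u) volume a b := by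
    intro a b ha hb
    refine (hcont.mono ?_).intervalIntegrable
    intro x hx
    exact le_trans (le_min ha hb) hx.1
  -- W b - W a = ∫ a..b
  have hWsub : ∀ a b : ℝ, 0 ≤ a → 0 ≤ b →
      W b - W a = ∫ u in a..b, 1 / w u := by
    intro a b ha hb
    rw [hW a, hW b]
    rw [← intervalIntegral.integral_add_adjacent_intervals (hInt 0 a le_rfl ha)
      (hInt a b ha hb)]
    ring
  -- W is monotone on [0,∞)
  have hWmono : ∀ a b : ℝ, 0 ≤ a → a ≤ b → W a ≤ W b := by
    intro a b ha hab
    have hb : 0 ≤ b := le_trans ha hab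
    have h := hWsub a b ha hb
    have hnn : 0 ≤ ∫ u in a..b, 1 / w u := by
      apply intervalIntegral.integral_nonneg hab
      intro u hu
      exact le_of_lt (div_pos one_pos (hw_pos u (le_trans ha hu.1)))
    linarith
  -- key: for c > 1, eventually (in y) W (c*y) - W y > C
  have key : ∀ c : ℝ, 1 < c → ∀ᶠ y in atTop, C < W (c * y) - W y := by
    intro c hc
    have hlogc : 0 < Real.log c := Real.log_pos hc
    set M := (C + 1) / Real.log c with hM
    have hC0 : (0:ℝ) ≤ C := le_trans (abs_nonneg _) (hC 0 le_rfl)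
    have hM0 : 0 < M := div_pos (by linarith) hlogc
    obtain ⟨y₀, hy₀⟩ := eventually_atTop.mp (hl_inf.eventually (eventually_ge_atTop M))
    filter_upwards [eventually_ge_atTop (max y₀ 1)] with y hy
    have hy1 : (1:ℝ) ≤ y := le_trans (le_max_right _ _) hy
    have hyy₀ : y₀ ≤ y := le_trans (le_max_left _ _) hy
    have hypos : (0:ℝ) < y := lt_of_lt_of_le one_pos hy1
    have hycy : y ≤ c * y := by nlinarith
    have hcy0 : (0:ℝ) < c * y := by nlinarith
    rw [hWsub y (c * y) hypos.le hcy0.le]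
    -- lower-bound the integrand by M / u
    have hintM : IntervalIntegrable (fun u => M * (1 / u)) volume y (c * y) := by
      apply ContinuousOn.intervalIntegrable
      apply continuousOn_const.mul
      apply continuousOn_const.div continuousOn_id
      intro x hx
      have : y ≤ x := by
        rcases hx with ⟨h1, h2⟩
        simpa [min_eq_left hycy] using h1
      exact ne_of_gt (lt_of_lt_of_le hypos this)
    have hmono : ∀ u ∈ Set.Icc y (c * y), M * (1 / u) ≤ 1 / w u := by
      intro u hu
      have hu0 : 0 < u := lt_of_lt_of_le hypos hu.1
      have hlu : M ≤ ℓ u := hy₀ u (le_trans hyy₀ hu.1)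
      have hlu0 : 0 < ℓ u := lt_of_lt_of_le hM0 hlu
      rw [hwl u hu0, one_div_div]
      rw [mul_one_div]
      gcongr
    have hle : ∫ u in y..(c * y), M * (1 / u) ≤ ∫ u in y..(c * y), 1 / w u :=
      intervalIntegral.integral_mono_on hycy hintM (hInt y (c * y) hypos.le hcy0.le) hmono
    have hval : ∫ u in y..(c * y), M * (1 / u) = M * Real.log c := by
      rw [intervalIntegral.integral_const_mul, integral_one_div]
      · congr 1
        rw [mul_div_assoc, div_self hypos.ne', mul_one]
      · intro h
        rcases h with ⟨h1, h2⟩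
        have : y ≤ (0:ℝ) := by simpa [min_eq_left hycy] using h1
        linarith
    have hMC : M * Real.log c = C + 1 := div_mul_cancel₀ _ hlogc.ne'
    linarith [hle, hval, hMC]
  -- main squeeze argument
  rw [Metric.tendsto_nhds]
  intro ε hε
  set c := 1 + ε / 2 with hcdef
  have hc : 1 < c := by simp [hcdef]; linarith
  have hc0 : (0:ℝ) < c := lt_trans one_pos hc
  filter_upwards [eventually_ge_atTop (0:ℝ),
    hg_inf.eventually (key c hc), hf_inf.eventually (key c hc)] with x hx hkg hkf
  have hfx : 0 < f x := hf_pos x hx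
  have hgx : 0 < g x := hg_pos x hx
  have habs : |W (f x) - W (g x)| ≤ C := hC x hx
  -- f x ≤ c * g x
  have h1 : f x ≤ c * g x := by
    by_contra h
    push_neg at h
    have : W (c * g x) ≤ W (f x) := hWmono _ _ (by positivity) h.le
    have : C < W (f x) - W (g x) := by linarith [hkg]
    have := le_abs_self (W (f x) - W (g x))
    linarith
  -- g x ≤ c * f x
  have h2 : g x ≤ c * f x := by
    by_contra h
    push_neg at h
    have : W (c * f x) ≤ W (g x) := hWmono _ _ (by positivity) h.le
    have : C < W (g x) - W (f x) := by linarith [hkf]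
    have := neg_le_abs (W (f x) - W (g x))
    have habs' : -(W (f x) - W (g x)) ≤ C := by
      calc -(W (f x) - W (g x)) ≤ |W (f x) - W (g x)| := neg_le_abs _
        _ ≤ C := habs
    linarith
  -- conclude |f x / g x - 1| < ε
  rw [Real.dist_eq]
  have hub : f x / g x ≤ c := (div_le_iff₀ hgx).mpr (by linarith [h1])
  have hlb : 1 / c ≤ f x / g x := by
    rw [div_le_div_iff₀ hc0 hgx]
    nlinarith [h2]
  have hinv : 1 / c * c = 1 := one_div_mul_cancel hc0.ne'
  have h1c : 1 - 1 / c ≤ c - 1 := by nlinarith [hinv, sq_nonneg (c - 1), hc0]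
  have habs2 : |f x / g x - 1| ≤ c - 1 := by
    rw [abs_le]
    constructor
    · linarith [hlb, h1c]
    · linarith [hub]
  have hce : c - 1 = ε / 2 := by rw [hcdef]; ring
  linarith
end

section
/- For every λ > 0, the difference W(λx) − W(x) is asymptotically equivalent to (log λ)·ℓ(x) as x → ∞. -/
open Filter MeasureTheory

private lemma ell_pos (w ℓ : ℝ → ℝ) (hw_pos : ∀ x, 0 ≤ x → 0 < w x)
    (hwl : ∀ x, 0 < x → w x = x / ℓ x) : ∀ x, 0 < x → 0 < ℓ x := by
  intro x hx
  by_contra h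
  push_neg at h
  have hw := hw_pos x hx.le
  rw [hwl x hx] at hw
  rcases eq_or_lt_of_le h with h0 | hneg
  · rw [h0, div_zero] at hw; exact lt_irrefl _ hw
  · have : x / ℓ x < 0 := div_neg_of_pos_of_neg hx hneg
    linarith

private lemma W_diff_bounds (w W : ℝ → ℝ)
    (hw_cont : ContinuousOn w (Set.Ici 0))
    (hw_pos : ∀ x, 0 ≤ x → 0 < w x)
    (hw_mono : MonotoneOn w (Set.Ici 0))
    (hW : ∀ x, W x = ∫ u in (0:ℝ)..x, 1 / w u)
    {a b : ℝ} (ha : 0 ≤ a) (hab : a ≤ b) :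
    (b - a) / w b ≤ W b - W a ∧ W b - W a ≤ (b - a) / w a := by
  have hb : 0 ≤ b := ha.trans hab
  have hcont : ContinuousOn (fun u => 1 / w u) (Set.Ici 0) := by
    apply ContinuousOn.div continuousOn_const hw_cont
    intro x hx; exact (hw_pos x hx).ne'
  have hint : ∀ c d : ℝ, 0 ≤ c → c ≤ d →
      IntervalIntegrable (fun u => 1 / w u) volume c d := by
    intro c d hc hcd
    apply ContinuousOn.intervalIntegrable
    apply hcont.mono
    rw [Set.uIcc_of_le hcd]
    exact fun x hx => hc.trans hx.1
  have hdiff : W b - W a = ∫ u in a..b, 1 / w u := by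
    rw [hW, hW]
    exact intervalIntegral.integral_interval_sub_left (hint 0 b le_rfl hb)
      (hint 0 a le_rfl ha)
  constructor
  · have h1 : ∫ _u in a..b, (1 / w b) ≤ ∫ u in a..b, 1 / w u := by
      apply intervalIntegral.integral_mono_on hab (intervalIntegrable_const)
        (hint a b ha hab)
      intro u hu
      have hu0 : (0:ℝ) ≤ u := ha.trans hu.1
      exact one_div_le_one_div_of_le (hw_pos u hu0) (hw_mono hu0 hb hu.2)
    rw [intervalIntegral.integral_const, smul_eq_mul] at h1
    rw [hdiff]
    calc (b - a) / w b = (b - a) * (1 / w b) := by ring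
      _ ≤ _ := h1
  · have h1 : ∫ u in a..b, 1 / w u ≤ ∫ _u in a..b, (1 / w a) := by
      apply intervalIntegral.integral_mono_on hab (hint a b ha hab)
        (intervalIntegrable_const)
      intro u hu
      have hu0 : (0:ℝ) ≤ u := ha.trans hu.1
      exact one_div_le_one_div_of_le (hw_pos a ha) (hw_mono ha hu0 hu.1)
    rw [intervalIntegral.integral_const, smul_eq_mul] at h1
    rw [hdiff]
    calc ∫ u in a..b, 1 / w u ≤ (b - a) * (1 / w a) := h1
      _ = (b - a) / w a := by ring

private lemma W_per_term (w ℓ W : ℝ → ℝ)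
    (hw_cont : ContinuousOn w (Set.Ici 0))
    (hw_pos : ∀ x, 0 ≤ x → 0 < w x)
    (hw_mono : MonotoneOn w (Set.Ici 0))
    (hwl : ∀ x, 0 < x → w x = x / ℓ x)
    (hW : ∀ x, W x = ∫ u in (0:ℝ)..x, 1 / w u)
    {r y : ℝ} (hr : 1 ≤ r) (hy : 0 < y) :
    (1 - 1/r) * ℓ (r * y) ≤ W (r * y) - W y ∧
      W (r * y) - W y ≤ (r - 1) * ℓ y := by
  have hr0 : (0:ℝ) < r := lt_of_lt_of_le one_pos hr
  have hy' : y ≤ r * y := le_mul_of_one_le_left hy.le hr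
  have hry : 0 < r * y := mul_pos hr0 hy
  obtain ⟨h1, h2⟩ := W_diff_bounds w W hw_cont hw_pos hw_mono hW hy.le hy'
  have hly : 0 < ℓ y := ell_pos w ℓ hw_pos hwl y hy
  have hlry : 0 < ℓ (r * y) := ell_pos w ℓ hw_pos hwl (r * y) hry
  constructor
  · have heq : (1 - 1/r) * ℓ (r * y) = (r * y - y) / (r * y / ℓ (r * y)) := by
      rw [div_div_eq_mul_div]
      field_simp
    rw [heq, ← hwl (r * y) hry]
    exact h1
  · have heq : (r * y - y) / (y / ℓ y) = (r - 1) * ℓ y := by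
      rw [div_div_eq_mul_div]
      field_simp
    rw [hwl y hy, heq] at h2
    exact h2

set_option maxHeartbeats 2000000 in
private lemma main_gt_one (w ℓ W : ℝ → ℝ)
    (hw_cont : ContinuousOn w (Set.Ici 0))
    (hw_pos : ∀ x, 0 ≤ x → 0 < w x)
    (hw_mono : MonotoneOn w (Set.Ici 0))
    (hwl : ∀ x, 0 < x → w x = x / ℓ x)
    (hl_slow : ∀ c, 0 < c → Tendsto (fun x => ℓ (c * x) / ℓ x) atTop (nhds 1))
    (hW : ∀ x, W x = ∫ u in (0:ℝ)..x, 1 / w u)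
    (lam : ℝ) (hlam : 1 < lam) :
    Tendsto (fun x => (W (lam * x) - W x) / ℓ x) atTop (nhds (Real.log lam)) := by
  have hlam0 : (0:ℝ) < lam := lt_trans one_pos hlam
  set L := Real.log lam with hL
  have hL0 : 0 < L := Real.log_pos hlam
  rw [Metric.tendsto_nhds]
  intro ε hε
  -- choose n
  obtain ⟨m, hm⟩ := exists_nat_gt (2 * lam ^ 2 * L ^ 2 / ε)
  set n : ℕ := max m 1 with hn
  have hn1 : 1 ≤ n := le_max_right m 1
  have hnR : (1:ℝ) ≤ (n:ℝ) := by exact_mod_cast hn1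
  have hn0 : (0:ℝ) < (n:ℝ) := lt_of_lt_of_le one_pos hnR
  have hnm : 2 * lam ^ 2 * L ^ 2 / ε < (n:ℝ) := by
    refine lt_of_lt_of_le hm ?_
    exact_mod_cast le_max_left m 1
  have hgap_small : lam ^ 2 * L ^ 2 / (n:ℝ) < ε / 2 := by
    rw [div_lt_iff₀ hε] at hnm
    rw [div_lt_div_iff₀ hn0 two_pos]
    nlinarith
  -- the geometric ratio
  set r : ℝ := lam ^ ((n:ℝ)⁻¹) with hrdef
  have hr1 : 1 < r := by
    rw [hrdef]
    exact (Real.one_lt_rpow_iff_of_pos hlam0).2 (Or.inl ⟨hlam, by positivity⟩)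
  have hr0 : (0:ℝ) < r := lt_trans one_pos hr1
  have hrn : r ^ n = lam := by
    rw [hrdef, ← Real.rpow_natCast (lam ^ ((n:ℝ)⁻¹)) n, ← Real.rpow_mul hlam0.le,
      inv_mul_cancel₀ hn0.ne', Real.rpow_one]
  have hlogr : Real.log r = L / n := by
    rw [hrdef, Real.log_rpow hlam0, div_eq_inv_mul]
  have hrlog_le : Real.log r ≤ r - 1 := Real.log_le_sub_one_of_pos hr0
  have hrlog_ge : 1 - r⁻¹ ≤ Real.log r := by
    have h := Real.log_le_sub_one_of_pos (inv_pos.2 hr0)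
    rw [Real.log_inv] at h
    linarith
  -- r - 1 is small
  have hexp : r = Real.exp (L / n) := by
    rw [hrdef, Real.rpow_def_of_pos hlam0, mul_comm, div_eq_inv_mul]
  clear_value L n r
  have ht0 : 0 ≤ L / n := by positivity
  have hexp_le : Real.exp (L / n) ≤ lam := by
    rw [← Real.exp_log hlam0]
    apply Real.exp_le_exp.2
    rw [div_le_iff₀ hn0]
    nlinarith
  have hr_sub : r - 1 ≤ L / n * lam := by
    have h1 : 1 + (-(L / n)) ≤ Real.exp (-(L / n)) := by
      linarith [Real.add_one_le_exp (-(L / (n:ℝ)))]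
    have h2 : Real.exp (-(L / n)) = (Real.exp (L / n))⁻¹ := Real.exp_neg _
    have h3 : 0 < Real.exp (L / n) := Real.exp_pos _
    -- exp t - 1 ≤ t * exp t
    have h4 : Real.exp (L / n) - 1 ≤ (L / n) * Real.exp (L / n) := by
      rw [h2] at h1
      have := mul_le_mul_of_nonneg_right h1 h3.le
      rw [inv_mul_cancel₀ h3.ne'] at this
      nlinarith
    calc r - 1 = Real.exp (L / n) - 1 := by rw [hexp]
      _ ≤ (L / n) * Real.exp (L / n) := h4
      _ ≤ (L / n) * lam := by
          apply mul_le_mul_of_nonneg_left hexp_le ht0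
  -- the Riemann-sum bounds
  have hLn_le : (n:ℝ) * (1 - r⁻¹) ≤ L := by
    have : (n:ℝ) * Real.log r = L := by rw [hlogr]; field_simp
    nlinarith [mul_le_mul_of_nonneg_left hrlog_ge hn0.le]
  have hUn_ge : L ≤ (n:ℝ) * (r - 1) := by
    have : (n:ℝ) * Real.log r = L := by rw [hlogr]; field_simp
    nlinarith [mul_le_mul_of_nonneg_left hrlog_le hn0.le]
  have hgap : (n:ℝ) * (r - 1) - (n:ℝ) * (1 - r⁻¹) < ε / 2 := by
    have hfact : (r - 1) - (1 - r⁻¹) = (r - 1) * (1 - r⁻¹) := by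
      field_simp
    have h1mr : 1 - r⁻¹ ≤ r - 1 := le_trans hrlog_ge hrlog_le
    have hsq : (r - 1) - (1 - r⁻¹) ≤ (r - 1) ^ 2 := by
      rw [hfact]
      nlinarith [sub_nonneg.2 hr1.le]
    have hr_sub_sq : (r - 1) ^ 2 ≤ (L / n * lam) ^ 2 := by
      have h0 : 0 ≤ r - 1 := sub_nonneg.2 hr1.le
      nlinarith
    have : (n:ℝ) * ((r - 1) - (1 - r⁻¹)) ≤ (n:ℝ) * (L / n * lam) ^ 2 := by
      apply mul_le_mul_of_nonneg_left (le_trans hsq hr_sub_sq) hn0.le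
    have heq : (n:ℝ) * (L / n * lam) ^ 2 = lam ^ 2 * L ^ 2 / n := by
      field_simp
    rw [heq] at this
    linarith [hgap_small]
  -- eventual closeness of the slowly varying ratios
  have hδ : 0 < ε / (4 * n * (r - 1)) := by
    have : 0 < r - 1 := sub_pos.2 hr1
    positivity
  set δ : ℝ := ε / (4 * n * (r - 1)) with hδdef
  have hδmul : (r - 1) * δ = ε / (4 * n) := by
    rw [hδdef]
    have : r - 1 ≠ 0 := ne_of_gt (sub_pos.2 hr1)
    field_simp
  have hev : ∀ᶠ x in atTop, ∀ i ∈ Finset.range (n + 1),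
      |ℓ (r ^ i * x) / ℓ x - 1| < δ := by
    rw [eventually_all_finset]
    intro i _
    have := hl_slow (r ^ i) (pow_pos hr0 i)
    have := Metric.tendsto_nhds.1 this δ hδ
    simpa [Real.dist_eq] using this
  filter_upwards [hev, eventually_gt_atTop (0:ℝ)] with x hx hx0
  have hlx : 0 < ℓ x := ell_pos w ℓ hw_pos hwl x hx0
  -- telescoping
  have htel : W (lam * x) - W x = ∑ i ∈ Finset.range n, (W (r ^ (i+1) * x) - W (r ^ i * x)) := by
    rw [Finset.sum_range_sub (fun i => W (r ^ i * x)) n]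
    rw [hrn, pow_zero, one_mul]
  have hterm : ∀ i ∈ Finset.range n,
      (1 - 1/r) - ε / (4 * n) ≤ (W (r ^ (i+1) * x) - W (r ^ i * x)) / ℓ x ∧
      (W (r ^ (i+1) * x) - W (r ^ i * x)) / ℓ x ≤ (r - 1) + ε / (4 * n) := by
    intro i hi
    rw [Finset.mem_range] at hi
    have hyi : 0 < r ^ i * x := mul_pos (pow_pos hr0 i) hx0
    have hmul : r ^ (i+1) * x = r * (r ^ i * x) := by rw [pow_succ]; ring
    obtain ⟨hlo, hhi⟩ := W_per_term w ℓ W hw_cont hw_pos hw_mono hwl hW hr1.le hyi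
    rw [← hmul] at hlo hhi
    have hratio_i : |ℓ (r ^ i * x) / ℓ x - 1| < δ := hx i (Finset.mem_range.2 (by omega))
    have hratio_i1 : |ℓ (r ^ (i+1) * x) / ℓ x - 1| < δ := hx (i+1) (Finset.mem_range.2 (by omega))
    rw [abs_lt] at hratio_i hratio_i1
    have h1mr : (0:ℝ) ≤ 1 - 1/r := by
      rw [one_div]
      have : r⁻¹ ≤ 1 := inv_le_one_of_one_le₀ hr1.le
      linarith
    have h1mr' : 1 - 1/r ≤ r - 1 := by
      rw [one_div]; linarith [hrlog_ge, hrlog_le]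
    constructor
    · have hlo' : (1 - 1/r) * ℓ (r ^ (i+1) * x) / ℓ x ≤ (W (r ^ (i+1) * x) - W (r ^ i * x)) / ℓ x := by
        gcongr
      rw [mul_div_assoc] at hlo'
      have hR1 : 1 - δ < ℓ (r ^ (i+1) * x) / ℓ x := by linarith [hratio_i1.1]
      have e1 : (1 - 1/r) * (1 - δ) ≤ (1 - 1/r) * (ℓ (r ^ (i+1) * x) / ℓ x) :=
        mul_le_mul_of_nonneg_left hR1.le h1mr
      have e3 : (1 - 1/r) * δ ≤ (r - 1) * δ := mul_le_mul_of_nonneg_right h1mr' hδ.le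
      nlinarith [hδmul, hlo', e1, e3]
    · have hhi' : (W (r ^ (i+1) * x) - W (r ^ i * x)) / ℓ x ≤ (r - 1) * ℓ (r ^ i * x) / ℓ x := by
        gcongr
      rw [mul_div_assoc] at hhi'
      have hR0 : ℓ (r ^ i * x) / ℓ x < 1 + δ := by linarith [hratio_i.2]
      have hr10 : (0:ℝ) ≤ r - 1 := sub_nonneg.2 hr1.le
      have e1 : (r - 1) * (ℓ (r ^ i * x) / ℓ x) ≤ (r - 1) * (1 + δ) :=
        mul_le_mul_of_nonneg_left hR0.le hr10
      nlinarith [hδmul, hhi', e1]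
  -- assemble
  have hS : (W (lam * x) - W x) / ℓ x
      = ∑ i ∈ Finset.range n, (W (r ^ (i+1) * x) - W (r ^ i * x)) / ℓ x := by
    rw [htel, Finset.sum_div]
  have hupper : (W (lam * x) - W x) / ℓ x ≤ (n:ℝ) * ((r - 1) + ε / (4 * n)) := by
    rw [hS]
    calc ∑ i ∈ Finset.range n, (W (r ^ (i+1) * x) - W (r ^ i * x)) / ℓ x
        ≤ ∑ _i ∈ Finset.range n, ((r - 1) + ε / (4 * n)) :=
          Finset.sum_le_sum (fun i hi => (hterm i hi).2)
      _ = (n:ℝ) * ((r - 1) + ε / (4 * n)) := by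
          rw [Finset.sum_const, Finset.card_range, nsmul_eq_mul]
  have hlower : (n:ℝ) * ((1 - 1/r) - ε / (4 * n)) ≤ (W (lam * x) - W x) / ℓ x := by
    rw [hS]
    calc (n:ℝ) * ((1 - 1/r) - ε / (4 * n))
        = ∑ _i ∈ Finset.range n, ((1 - 1/r) - ε / (4 * n)) := by
          rw [Finset.sum_const, Finset.card_range, nsmul_eq_mul]
      _ ≤ _ := Finset.sum_le_sum (fun i hi => (hterm i hi).1)
  have hquarter : (n:ℝ) * (ε / (4 * n)) = ε / 4 := by
    field_simp
  have hd1 : (n:ℝ) * ((r - 1) + ε / (4 * n)) = (n:ℝ) * (r - 1) + ε / 4 := by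
    rw [mul_add, hquarter]
  have hd2 : (n:ℝ) * ((1 - 1/r) - ε / (4 * n)) = (n:ℝ) * (1 - r⁻¹) - ε / 4 := by
    rw [mul_sub, hquarter, one_div]
  rw [Real.dist_eq, abs_lt]
  constructor <;> linarith

set_option maxHeartbeats 1000000 in
/-- For every `λ > 0`, `W(λx) − W(x)` is asymptotically equivalent to `(log λ)·ℓ(x)`:
the ratio `(W(λx) − W(x))/ℓ(x)` tends to `log λ` as `x → ∞`. -/
theorem W_lambda_diff_asymptotic
(w ℓ W : ℝ → ℝ)
    (hw_cont : ContinuousOn w (Set.Ici 0))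
    (hw_pos : ∀ x, 0 ≤ x → 0 < w x)
    (hw_mono : MonotoneOn w (Set.Ici 0))
    (hwl : ∀ x, 0 < x → w x = x / ℓ x)
    (hl_slow : ∀ c, 0 < c → Tendsto (fun x => ℓ (c * x) / ℓ x) atTop (nhds 1))
    (hl_inf : Tendsto ℓ atTop atTop)
    (hW : ∀ x, W x = ∫ u in (0:ℝ)..x, 1 / w u)
    :
    ∀ lam : ℝ, 0 < lam →
      Tendsto (fun x => (W (lam * x) - W x) / ℓ x) atTop (nhds (Real.log lam)) := by
  intro lam hlam0
  rcases lt_trichotomy lam 1 with hlt | heq | hgt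
  · -- lam < 1
    have hμ : 1 < lam⁻¹ := by
      have h1 : lam * lam⁻¹ = 1 := mul_inv_cancel₀ hlam0.ne'
      have h2 : 0 < lam⁻¹ := inv_pos.2 hlam0
      nlinarith
    have hg := main_gt_one w ℓ W hw_cont hw_pos hw_mono hwl hl_slow hW lam⁻¹ hμ
    have hcomp : Tendsto (fun x : ℝ => lam * x) atTop atTop :=
      Tendsto.const_mul_atTop hlam0 tendsto_id
    have h1 := hg.comp hcomp
    have h2 := hl_slow lam hlam0
    have h3 := h1.neg.mul h2
    have hlim : -Real.log lam⁻¹ * 1 = Real.log lam := by rw [Real.log_inv]; ring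
    rw [hlim] at h3
    apply h3.congr'
    filter_upwards [eventually_gt_atTop (0:ℝ)] with x hx0
    have hlamx : 0 < lam * x := mul_pos hlam0 hx0
    have hl1 : 0 < ℓ (lam * x) := ell_pos w ℓ hw_pos hwl _ hlamx
    have hlx : 0 < ℓ x := ell_pos w ℓ hw_pos hwl x hx0
    have hxx : lam⁻¹ * (lam * x) = x := by field_simp
    simp only [Function.comp_apply, hxx]
    field_simp
    ring
  · subst heq
    simp only [one_mul, sub_self, zero_div, Real.log_one]
    exact tendsto_const_nhds
  · exact main_gt_one w ℓ W hw_cont hw_pos hw_mono hwl hl_slow hW lam hgt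
end

section
/- The slowly varying factor ℓ is negligible compared to W: ℓ(x) = o(W(x)) as x → ∞. -/
open Filter MeasureTheory

/-- The slowly varying factor `ℓ` is negligible compared to `W`:
`ℓ(x) = o(W(x))` as `x → ∞`. -/
theorem ell_littleO_W
(w ℓ W : ℝ → ℝ)
    (hw_cont : ContinuousOn w (Set.Ici 0))
    (hw_pos : ∀ x, 0 ≤ x → 0 < w x)
    (hw_mono : MonotoneOn w (Set.Ici 0))
    (hwl : ∀ x, 0 < x → w x = x / ℓ x)
    (hl_slow : ∀ c, 0 < c → Tendsto (fun x => ℓ (c * x) / ℓ x) atTop (nhds 1))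
    (hl_inf : Tendsto ℓ atTop atTop)
    (hW : ∀ x, W x = ∫ u in (0:ℝ)..x, 1 / w u)
    :
    Tendsto (fun x => ℓ x / W x) atTop (nhds 0) := by
  -- positivity of ℓ on positives
  have hl_pos : ∀ x : ℝ, 0 < x → 0 < ℓ x := by
    intro x hx
    by_contra h
    push_neg at h
    have h1 : 0 < w x := hw_pos x hx.le
    rw [hwl x hx] at h1
    have : x / ℓ x ≤ 0 := by rw [div_nonpos_iff]; left; exact ⟨hx.le, h⟩
    linarith
  have hcont : ContinuousOn (fun u : ℝ => 1 / w u) (Set.Ici 0) :=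
    ContinuousOn.div continuousOn_const hw_cont (fun x hx => (hw_pos x hx).ne')
  have hint : ∀ a b : ℝ, 0 ≤ a → a ≤ b →
      IntervalIntegrable (fun u => 1 / w u) volume a b := by
    intro a b ha hab
    apply ContinuousOn.intervalIntegrable
    apply hcont.mono
    rw [Set.uIcc_of_le hab]
    intro u hu
    exact le_trans ha hu.1
  have hWadd : ∀ a b : ℝ, 0 ≤ a → a ≤ b → W b = W a + ∫ u in a..b, 1 / w u := by
    intro a b ha hab
    rw [hW a, hW b,
      ← intervalIntegral.integral_add_adjacent_intervals (hint 0 a le_rfl ha)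
        (hint a b ha hab)]
  have hlow : ∀ a b : ℝ, 0 ≤ a → a ≤ b → (b - a) / w b ≤ ∫ u in a..b, 1 / w u := by
    intro a b ha hab
    have hwb : 0 < w b := hw_pos b (ha.trans hab)
    have hmono : ∫ u in a..b, (1 / w b) ≤ ∫ u in a..b, 1 / w u := by
      apply intervalIntegral.integral_mono_on hab intervalIntegrable_const
        (hint a b ha hab)
      intro u hu
      have h1 : w u ≤ w b :=
        hw_mono (Set.mem_Ici.mpr (ha.trans hu.1)) (Set.mem_Ici.mpr (ha.trans hab)) hu.2
      exact one_div_le_one_div_of_le (hw_pos u (ha.trans hu.1)) h1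
    calc (b - a) / w b = (b - a) • (1 / w b) := by
          rw [smul_eq_mul]; ring
      _ = ∫ u in a..b, (1 / w b) := (intervalIntegral.integral_const _).symm
      _ ≤ _ := hmono
  -- block estimate
  have hblock : ∀ (k : ℕ) (x : ℝ), 0 < x →
      W (x / 2 ^ (k + 1)) + ℓ (x / 2 ^ k) / 2 ≤ W (x / 2 ^ k) := by
    intro k x hx
    set a := x / 2 ^ (k + 1) with ha_def
    set b := x / 2 ^ k with hb_def
    have ha : 0 < a := by positivity
    have hb : 0 < b := by positivity
    have hab : a ≤ b := by
      rw [ha_def, hb_def]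
      apply div_le_div_of_nonneg_left hx.le (by positivity)
      exact pow_le_pow_right₀ (by norm_num) (Nat.le_succ k)
    have hlb : 0 < ℓ b := hl_pos b hb
    have hwb : w b = b / ℓ b := hwl b hb
    have hba : b - a = b / 2 := by
      rw [ha_def, hb_def, pow_succ]
      field_simp
      ring
    have hkey : (b - a) / w b = ℓ b / 2 := by
      rw [hba, hwb]
      field_simp
    have h1 := hWadd a b ha.le hab
    have h2 := hlow a b ha.le hab
    rw [hkey] at h2
    linarith
  -- W nonneg
  have hWnn : ∀ y : ℝ, 0 ≤ y → 0 ≤ W y := by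
    intro y hy
    rw [hW y]
    apply intervalIntegral.integral_nonneg hy
    intro u hu
    exact le_of_lt (one_div_pos.mpr (hw_pos u hu.1))
  -- eventual comparison ℓ(x/2^n) ≥ ℓ x / 2
  have hhalf : ∀ n : ℕ, ∀ᶠ x in atTop, ℓ x / 2 ≤ ℓ (x / 2 ^ n) := by
    intro n
    have hc : (0:ℝ) < (1/2) ^ n := by positivity
    have h1 := (hl_slow ((1/2)^n) hc).eventually
      (eventually_gt_nhds (by norm_num : (1/2:ℝ) < 1))
    have h2 := hl_inf.eventually_gt_atTop 0
    filter_upwards [h1, h2] with x hx hlx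
    have heq : (1/2:ℝ) ^ n * x = x / 2 ^ n := by
      rw [div_pow, one_pow]
      ring
    rw [heq] at hx
    have := (lt_div_iff₀ hlx).mp hx
    linarith
  -- key eventual lower bound on W
  have key : ∀ n : ℕ, ∀ᶠ x in atTop, W (x / 2 ^ n) + (n : ℝ) / 4 * ℓ x ≤ W x := by
    intro n
    induction n with
    | zero =>
      filter_upwards with x
      simp
    | succ n ih =>
      have h3 := eventually_gt_atTop (0:ℝ)
      filter_upwards [ih, hhalf n, h3] with x hx1 hx2 hx3
      have hb := hblock n x hx3
      push_cast
      linarith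
  -- conclusion via ε
  rw [NormedAddCommGroup.tendsto_nhds_zero]
  intro ε hε
  obtain ⟨n, hn⟩ := exists_nat_gt (4 / ε)
  have hn1 : 1 ≤ n := by
    by_contra h
    push_neg at h
    interval_cases n
    simp at hn
    nlinarith [div_pos (by norm_num : (0:ℝ) < 4) hε]
  filter_upwards [key n, hl_inf.eventually_gt_atTop 0, eventually_gt_atTop (0:ℝ)]
    with x hx1 hx2 hx3
  have hWsub : 0 ≤ W (x / 2 ^ n) := hWnn _ (by positivity)
  have hn' : (1:ℝ) ≤ (n:ℝ) := by exact_mod_cast hn1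
  have hWx : (n:ℝ) / 4 * ℓ x ≤ W x := by linarith
  have hWpos : 0 < W x := lt_of_lt_of_le (by nlinarith) hWx
  have hεn : 4 / ε < (n:ℝ) := hn
  rw [Real.norm_eq_abs, abs_of_pos (div_pos hx2 hWpos), div_lt_iff₀ hWpos]
  have h4 : 4 < ε * n := by
    rw [div_lt_iff₀ hε] at hn
    linarith
  nlinarith
end

section
/- Let ψ : [0,∞) → [0,∞) be measurable with W(x) − W_ψ(x) = o(ℓ(x)) as x → ∞, where W_ψ(x) := ∫₀ˣ du/w(u + ψ(u)). Then for any positive functions f, g tending to +∞ at infinity, if |W(f(x)) − W_ψ(g(x))| is bounded on [0,∞), then f(x)/g(x) → 1 as x → ∞. -/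
open Filter MeasureTheory

lemma W_key (w W : ℝ → ℝ)
    (hw_cont : ContinuousOn w (Set.Ici 0))
    (hw_pos : ∀ x, 0 ≤ x → 0 < w x)
    (hw_mono : MonotoneOn w (Set.Ici 0))
    (hW : ∀ x, W x = ∫ u in (0:ℝ)..x, 1 / w u)
    {a b : ℝ} (ha : 0 ≤ a) (hab : a ≤ b) :
    (b - a) / w b ≤ W b - W a := by
  have hb : (0:ℝ) ≤ b := ha.trans hab
  have hcont : ∀ {c d : ℝ}, 0 ≤ c → c ≤ d →
      IntervalIntegrable (fun u => 1 / w u) MeasureTheory.volume c d := by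
    intro c d hc hcd
    apply ContinuousOn.intervalIntegrable
    apply ContinuousOn.div continuousOn_const
    · exact hw_cont.mono (by rw [Set.uIcc_of_le hcd]; intro x hx; exact hc.trans hx.1)
    · intro x hx
      rw [Set.uIcc_of_le hcd] at hx
      exact (hw_pos x (hc.trans hx.1)).ne'
  have h1 : W b - W a = ∫ u in a..b, 1 / w u := by
    rw [hW, hW, intervalIntegral.integral_interval_sub_left (hcont le_rfl hb) (hcont le_rfl ha)]
  rw [h1]
  have h2 : (∫ _u in a..b, 1 / w b) ≤ ∫ u in a..b, 1 / w u := by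
    apply intervalIntegral.integral_mono_on hab intervalIntegrable_const (hcont ha hab)
    intro u hu
    have hu0 : 0 ≤ u := ha.trans hu.1
    exact one_div_le_one_div_of_le (hw_pos u hu0)
      (hw_mono (Set.mem_Ici.mpr hu0) (Set.mem_Ici.mpr hb) hu.2)
  calc (b - a) / w b = ∫ _u in a..b, 1 / w b := by
        rw [intervalIntegral.integral_const, smul_eq_mul]; ring
    _ ≤ _ := h2

/-- If `ψ ≥ 0` is measurable with `W(x) − W_ψ(x) = o(ℓ(x))`, where
`W_ψ(x) = ∫₀ˣ du / w(u + ψ(u))`, then for positive `f, g` tending to `+∞`,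
boundedness of `|W(f(x)) − W_ψ(g(x))|` on `[0,∞)` implies `f(x)/g(x) → 1`. -/
theorem bdd_W_Wpsi_diff_implies_ratio_tendsto_one
(w ℓ W : ℝ → ℝ)
    (hw_cont : ContinuousOn w (Set.Ici 0))
    (hw_pos : ∀ x, 0 ≤ x → 0 < w x)
    (hw_mono : MonotoneOn w (Set.Ici 0))
    (hwl : ∀ x, 0 < x → w x = x / ℓ x)
    (hl_slow : ∀ c, 0 < c → Tendsto (fun x => ℓ (c * x) / ℓ x) atTop (nhds 1))
    (hl_inf : Tendsto ℓ atTop atTop)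
    (hW : ∀ x, W x = ∫ u in (0:ℝ)..x, 1 / w u)
    (ψ Wψ : ℝ → ℝ)
    (hψ_meas : Measurable ψ)
    (hψ_nonneg : ∀ x, 0 ≤ x → 0 ≤ ψ x)
    (hWψ : ∀ x, Wψ x = ∫ u in (0:ℝ)..x, 1 / w (u + ψ u))
    (hsmall : Tendsto (fun x => (W x - Wψ x) / ℓ x) atTop (nhds 0))
    (f g : ℝ → ℝ)
    (hf_pos : ∀ x, 0 ≤ x → 0 < f x) (hg_pos : ∀ x, 0 ≤ x → 0 < g x)
    (hf_inf : Tendsto f atTop atTop) (hg_inf : Tendsto g atTop atTop)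
    (hbdd : ∃ C : ℝ, ∀ x, 0 ≤ x → |W (f x) - Wψ (g x)| ≤ C) :
    Tendsto (fun x => f x / g x) atTop (nhds 1) := by
  obtain ⟨C, hC⟩ := hbdd
  rw [Metric.tendsto_nhds]
  intro ε' hε'
  obtain ⟨ε, hε, hεε'⟩ : ∃ e : ℝ, 0 < e ∧ e < ε' := ⟨ε' / 2, by positivity, by linarith⟩
  obtain ⟨c, hcdef⟩ : ∃ cc : ℝ, cc = 1 + ε := ⟨1 + ε, rfl⟩
  have hc1 : 1 < c := by rw [hcdef]; linarith
  have hc0 : 0 < c := by linarith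
  obtain ⟨δ, hδdef⟩ : ∃ dd : ℝ, dd = ε / (8 * c) := ⟨_, rfl⟩
  have hδ : 0 < δ := by rw [hδdef]; positivity
  have h8 : ε = 8 * c * δ := by rw [hδdef]; field_simp
  -- eventual facts
  have Eslow : ∀ᶠ x in atTop, (1:ℝ)/2 ≤ ℓ (c * g x) / ℓ (g x) :=
    ((hl_slow c hc0).comp hg_inf).eventually (eventually_ge_nhds (by norm_num))
  have Elbig : ∀ᶠ x in atTop, max 1 (C / δ) < ℓ (g x) :=
    (hl_inf.comp hg_inf).eventually_gt_atTop _
  have Esmall : ∀ᶠ x in atTop, |W (g x) - Wψ (g x)| / |ℓ (g x)| < δ := by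
    have h := (hsmall.comp hg_inf)
    rw [Metric.tendsto_nhds] at h
    simpa [Real.dist_eq, Function.comp, abs_div] using h δ hδ
  filter_upwards [Eslow, Elbig, Esmall, eventually_ge_atTop (0:ℝ)] with x hx1 hx2 hx3 hx0
  have hgx : 0 < g x := hg_pos x hx0
  have hfx : 0 < f x := hf_pos x hx0
  have hlg : 0 < ℓ (g x) := lt_of_lt_of_le zero_lt_one ((le_max_left _ _).trans hx2.le)
  have hCδ : C < δ * ℓ (g x) := by
    have := (le_max_right 1 (C / δ)).trans_lt hx2
    rw [div_lt_iff₀ hδ] at this; linarith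
  have hWg : |W (g x) - Wψ (g x)| ≤ δ * ℓ (g x) := by
    rw [abs_of_pos hlg, div_lt_iff₀ hlg] at hx3
    linarith [hx3.le]
  have hWg1 : W (g x) - Wψ (g x) ≤ δ * ℓ (g x) := (le_abs_self _).trans hWg
  have hWg2 : -(δ * ℓ (g x)) ≤ W (g x) - Wψ (g x) := neg_le_of_abs_le hWg
  have hlcg : ℓ (g x) / 2 ≤ ℓ (c * g x) := by
    rw [div_le_div_iff₀ (by norm_num) hlg] at hx1; linarith
  have hlcg0 : 0 < ℓ (c * g x) := lt_of_lt_of_le (by positivity) hlcg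
  have hCfg : |W (f x) - Wψ (g x)| ≤ C := hC x hx0
  -- upper bound: f x ≤ c * g x
  have hub : f x ≤ c * g x := by
    by_contra h
    push_neg at h
    have k1 := W_key w W hw_cont hw_pos hw_mono hW (a := g x) (b := c * g x)
      hgx.le (by nlinarith)
    have k2 := W_key w W hw_cont hw_pos hw_mono hW (a := c * g x) (b := f x)
      (by positivity) h.le
    have k2' : (0:ℝ) ≤ (f x - c * g x) / w (f x) :=
      div_nonneg (by linarith) (hw_pos _ hfx.le).le
    have hwcg : w (c * g x) = (c * g x) / ℓ (c * g x) := hwl _ (by positivity)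
    have k1' : ε / c * ℓ (c * g x) ≤ W (c * g x) - W (g x) := by
      have heq : (c * g x - g x) / w (c * g x) = ε / c * ℓ (c * g x) := by
        rw [hwcg, div_div_eq_mul_div, div_eq_iff (by positivity), hcdef]
        field_simp
        ring
      rw [heq] at k1; linarith
    have hWfg : W (f x) - Wψ (g x) ≤ C := (le_abs_self _).trans hCfg
    have hεc : ε / c * ℓ (c * g x) ≥ ε / c * (ℓ (g x) / 2) := by
      apply mul_le_mul_of_nonneg_left hlcg (by positivity)
    have h4 : ε / c * (ℓ (g x) / 2) = 4 * δ * ℓ (g x) := by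
      rw [h8]; field_simp; ring
    linarith [mul_pos hδ hlg]
  -- lower bound: g x / c ≤ f x
  have hlb : g x / c ≤ f x := by
    by_contra h
    push_neg at h
    have k1 := W_key w W hw_cont hw_pos hw_mono hW (a := g x / c) (b := g x)
      (by positivity) (div_le_self hgx.le hc1.le)
    have k2 := W_key w W hw_cont hw_pos hw_mono hW (a := f x) (b := g x / c)
      hfx.le h.le
    have k2' : (0:ℝ) ≤ (g x / c - f x) / w (g x / c) :=
      div_nonneg (by linarith) (hw_pos _ (by positivity)).le
    have hwg : w (g x) = g x / ℓ (g x) := hwl _ hgx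
    have k1' : 8 * δ * ℓ (g x) ≤ W (g x) - W (g x / c) := by
      have heq : (g x - g x / c) / w (g x) = 8 * δ * ℓ (g x) := by
        rw [hwg, div_div_eq_mul_div, div_eq_iff (by positivity)]
        have hgc : g x - g x / c = ε / c * g x := by
          rw [hcdef]; field_simp; ring
        rw [hgc, h8]; field_simp
      rw [heq] at k1; linarith
    have hWfg : -C ≤ W (f x) - Wψ (g x) := neg_le_of_abs_le hCfg
    linarith [mul_pos hδ hlg]
  -- conclude
  have hr1 : f x / g x ≤ c := by rw [div_le_iff₀ hgx]; linarith [hub]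
  have hr2 : 1 / c ≤ f x / g x := by
    rw [div_le_div_iff₀ hc0 hgx]; linarith [(div_le_iff₀ hc0).mp hlb]
  rw [Real.dist_eq, abs_sub_lt_iff]
  constructor
  · have : f x / g x - 1 ≤ ε := by rw [hcdef] at hr1; linarith
    linarith
  · have h1c : 1 - ε ≤ 1 / c := by
      rw [le_div_iff₀ hc0, hcdef]; nlinarith
    have : 1 - f x / g x ≤ ε := by linarith
    linarith
end

section
/- For each η ∈ (0,1), the function Φ_{η,2}(x) := W^{-1}(η·W(x/η)) satisfies W(x) − W_{Φ_{η,2}}(x) = o(ℓ(x)) as x → ∞, where W_ψ(x) := ∫₀ˣ du/w(u + ψ(u)). -/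
set_option maxHeartbeats 1000000


open Filter MeasureTheory

/-- For `η ∈ (0,1)`, the function `Φ_{η,2}(x) = W⁻¹(η·W(x/η))` satisfies
`W(x) − W_{Φ_{η,2}}(x) = o(ℓ(x))` as `x → ∞`, where
`W_ψ(x) = ∫₀ˣ du / w(u + ψ(u))`.  Here `ℓ` is assumed eventually non-decreasing. -/
theorem W_sub_WPhi_eta_two_littleO_ell
(w ℓ W : ℝ → ℝ)
    (hw_cont : ContinuousOn w (Set.Ici 0))
    (hw_pos : ∀ x, 0 ≤ x → 0 < w x)
    (hw_mono : MonotoneOn w (Set.Ici 0))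
    (hwl : ∀ x, 0 < x → w x = x / ℓ x)
    (hl_slow : ∀ c, 0 < c → Tendsto (fun x => ℓ (c * x) / ℓ x) atTop (nhds 1))
    (hl_inf : Tendsto ℓ atTop atTop)
    (hW : ∀ x, W x = ∫ u in (0:ℝ)..x, 1 / w u)
    (Winv : ℝ → ℝ)
    (hWinv_left : ∀ x, 0 ≤ x → Winv (W x) = x)
    (hWinv_right : ∀ x, 0 ≤ x → W (Winv x) = x)
    (hl_mono : ∃ x₀ : ℝ, MonotoneOn ℓ (Set.Ici x₀))
    (η : ℝ) (hη : 0 < η) (hη1 : η < 1) :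
    Tendsto
      (fun x => (W x - ∫ u in (0:ℝ)..x, 1 / w (u + Winv (η * W (u / η)))) / ℓ x)
      atTop (nhds 0) := by
  obtain ⟨x₀, hx₀⟩ := hl_mono
  -- ℓ is positive on (0,∞)
  have hl_pos : ∀ x : ℝ, 0 < x → 0 < ℓ x := by
    intro x hx
    by_contra h
    push_neg at h
    have h1 : 0 < x / ℓ x := by rw [← hwl x hx]; exact hw_pos x hx.le
    have h2 : x / ℓ x ≤ 0 := div_nonpos_of_nonneg_of_nonpos hx.le h
    linarith
  -- 1/w = ℓ/x on (0,∞)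
  have hinvw : ∀ x : ℝ, 0 < x → 1 / w x = ℓ x / x := by
    intro x hx
    rw [hwl x hx, one_div_div]
  -- 1/w is antitone on [0,∞)
  have h1w_anti : AntitoneOn (fun u => 1 / w u) (Set.Ici 0) := by
    intro a ha b hb hab
    exact one_div_le_one_div_of_le (hw_pos a ha) (hw_mono ha hb hab)
  -- 1/w is interval integrable on nonneg intervals
  have hIint : ∀ a b : ℝ, 0 ≤ a → 0 ≤ b → IntervalIntegrable (fun u => 1 / w u) volume a b := by
    intro a b ha hb
    apply AntitoneOn.intervalIntegrable
    apply h1w_anti.mono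
    intro t ht
    rcases Set.mem_uIcc.mp ht with ⟨h1, _⟩ | ⟨h1, _⟩
    · exact le_trans ha h1
    · exact le_trans hb h1
  -- difference of W values as an interval integral
  have hWd : ∀ a b : ℝ, 0 ≤ a → 0 ≤ b → W b - W a = ∫ u in a..b, 1 / w u := by
    intro a b ha hb
    rw [hW a, hW b]
    rw [← intervalIntegral.integral_interval_sub_left (hIint 0 b le_rfl hb) (hIint 0 a le_rfl ha)]
  -- W is monotone on [0,∞)
  have hWmono : MonotoneOn W (Set.Ici 0) := by
    intro a ha b hb hab
    have h := hWd a b ha hb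
    have h2 : (0:ℝ) ≤ ∫ u in a..b, 1 / w u := by
      apply intervalIntegral.integral_nonneg hab
      intro t ht
      exact le_of_lt (one_div_pos.mpr (hw_pos t (le_trans ha ht.1)))
    linarith
  -- W is strictly monotone on [0,∞)
  have hWstrict : StrictMonoOn W (Set.Ici 0) := by
    intro a ha b hb hab
    have h := hWd a b ha hb
    have hwb := hw_pos b hb
    have hle : (b - a) • (1 / w b) ≤ ∫ u in a..b, 1 / w u := by
      rw [← intervalIntegral.integral_const]
      apply intervalIntegral.integral_mono_on hab.le (intervalIntegrable_const)
        (hIint a b ha hb)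
      intro t ht
      exact h1w_anti (le_trans ha ht.1) hb ht.2
    have : (0:ℝ) < (b - a) • (1 / w b) := by
      rw [smul_eq_mul]
      exact mul_pos (sub_pos.mpr hab) (one_div_pos.mpr hwb)
    linarith
  have hW0 : W 0 = 0 := by rw [hW 0, intervalIntegral.integral_same]
  have hWnonneg : ∀ x : ℝ, 0 ≤ x → 0 ≤ W x := by
    intro x hx
    rw [← hW0]
    exact hWmono (le_refl (0:ℝ)) hx hx
  -- integral comparison bounds over [a,b] ⊆ [x₀,∞)
  have hub : ∀ a b : ℝ, 0 < a → a ≤ b → x₀ ≤ a →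
      W b - W a ≤ ℓ b * (Real.log b - Real.log a) := by
    intro a b ha hab hax
    have hb : 0 < b := lt_of_lt_of_le ha hab
    rw [hWd a b ha.le hb.le]
    have key : (∫ u in a..b, 1 / w u) ≤ ∫ u in a..b, ℓ b * (1 / u) := by
      apply intervalIntegral.integral_mono_on hab (hIint a b ha.le hb.le)
      · apply ContinuousOn.intervalIntegrable
        apply ContinuousOn.mul continuousOn_const
        apply ContinuousOn.div continuousOn_const continuousOn_id
        intro t ht
        rcases Set.mem_uIcc.mp ht with ⟨h1, _⟩ | ⟨h1, _⟩
        · exact ne_of_gt (lt_of_lt_of_le ha h1)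
        · exact ne_of_gt (lt_of_lt_of_le hb h1)
      · intro t ht
        have ht0 : 0 < t := lt_of_lt_of_le ha ht.1
        rw [hinvw t ht0, div_eq_mul_one_div]
        apply mul_le_mul_of_nonneg_right _ (le_of_lt (one_div_pos.mpr ht0))
        exact hx₀ (le_trans hax ht.1) (le_trans hax (le_trans ht.1 ht.2)) ht.2
    calc (∫ u in a..b, 1 / w u) ≤ ∫ u in a..b, ℓ b * (1 / u) := key
      _ = ℓ b * ∫ u in a..b, 1 / u := by rw [← intervalIntegral.integral_const_mul]
      _ = ℓ b * (Real.log b - Real.log a) := by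
          rw [integral_one_div, Real.log_div (ne_of_gt hb) (ne_of_gt ha)]
          intro h
          rcases Set.mem_uIcc.mp h with ⟨h1, _⟩ | ⟨h1, _⟩
          · exact absurd h1 (not_le.mpr ha)
          · exact absurd h1 (not_le.mpr hb)
  have hlb : ∀ a b : ℝ, 0 < a → a ≤ b → x₀ ≤ a →
      ℓ a * (Real.log b - Real.log a) ≤ W b - W a := by
    intro a b ha hab hax
    have hb : 0 < b := lt_of_lt_of_le ha hab
    rw [hWd a b ha.le hb.le]
    have key : (∫ u in a..b, ℓ a * (1 / u)) ≤ ∫ u in a..b, 1 / w u := by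
      have hcont : IntervalIntegrable (fun u => ℓ a * (1 / u)) volume a b := by
        apply ContinuousOn.intervalIntegrable
        apply ContinuousOn.mul continuousOn_const
        apply ContinuousOn.div continuousOn_const continuousOn_id
        intro t ht
        rcases Set.mem_uIcc.mp ht with ⟨h1, _⟩ | ⟨h1, _⟩
        · exact ne_of_gt (lt_of_lt_of_le ha h1)
        · exact ne_of_gt (lt_of_lt_of_le hb h1)
      apply intervalIntegral.integral_mono_on hab hcont (hIint a b ha.le hb.le)
      intro t ht
      have ht0 : 0 < t := lt_of_lt_of_le ha ht.1
      rw [hinvw t ht0, div_eq_mul_one_div (ℓ t) t]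
      apply mul_le_mul_of_nonneg_right _ (le_of_lt (one_div_pos.mpr ht0))
      exact hx₀ hax (le_trans hax ht.1) ht.1
    calc ℓ a * (Real.log b - Real.log a)
        = ℓ a * ∫ u in a..b, 1 / u := by
          rw [integral_one_div, Real.log_div (ne_of_gt hb) (ne_of_gt ha)]
          intro h
          rcases Set.mem_uIcc.mp h with ⟨h1, _⟩ | ⟨h1, _⟩
          · exact absurd h1 (not_le.mpr ha)
          · exact absurd h1 (not_le.mpr hb)
      _ = ∫ u in a..b, ℓ a * (1 / u) := by rw [← intervalIntegral.integral_const_mul]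
      _ ≤ ∫ u in a..b, 1 / w u := key
  -- W tends to infinity
  set u₁ : ℝ := max x₀ 1 with hu₁def
  have hu₁pos : (0:ℝ) < u₁ := lt_of_lt_of_le one_pos (le_max_right _ _)
  have hu₁x₀ : x₀ ≤ u₁ := le_max_left _ _
  have hWtop : Tendsto W atTop atTop := by
    have hlow : Tendsto (fun b => W u₁ + ℓ u₁ * (Real.log b - Real.log u₁)) atTop atTop := by
      apply tendsto_atTop_add_const_left
      apply Tendsto.const_mul_atTop (hl_pos u₁ hu₁pos)
      exact tendsto_atTop_add_const_right _ _ Real.tendsto_log_atTop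
    apply tendsto_atTop_mono' atTop _ hlow
    filter_upwards [eventually_ge_atTop u₁] with b hb
    have := hlb u₁ b hu₁pos hb hu₁x₀
    linarith
  -- W is continuous on [0, b]
  have hWcont : ∀ b : ℝ, 0 ≤ b → ContinuousOn W (Set.Icc 0 b) := by
    intro b hb
    have : ContinuousOn (fun x => ∫ t in (0:ℝ)..x, 1 / w t) (Set.Icc 0 b) :=
      intervalIntegral.continuousOn_primitive_interval'
        (hIint 0 b le_rfl hb) (by rw [Set.uIcc_of_le hb]; exact Set.left_mem_Icc.mpr hb) |>.mono
        (by rw [Set.uIcc_of_le hb])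
    exact this.congr (fun x _ => hW x)
  -- W maps [0,∞) onto [0,∞)
  have hWsurj : ∀ y : ℝ, 0 ≤ y → ∃ x, 0 ≤ x ∧ W x = y := by
    intro y hy
    obtain ⟨b, hb⟩ := (hWtop.eventually (eventually_ge_atTop y)).and
      (eventually_ge_atTop 0) |>.exists
    have : y ∈ Set.Icc (W 0) (W b) := ⟨by rw [hW0]; exact hy, hb.1⟩
    obtain ⟨x, hx, hxW⟩ := intermediate_value_Icc hb.2 (hWcont b hb.2) this
    exact ⟨x, hx.1, hxW⟩
  -- the function Φ
  set Φ : ℝ → ℝ := fun u => Winv (η * W (u / η)) with hΦdef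
  have hηW : ∀ u : ℝ, 0 ≤ u → 0 ≤ η * W (u / η) := fun u hu =>
    mul_nonneg hη.le (hWnonneg _ (div_nonneg hu hη.le))
  have hΦ : ∀ u : ℝ, 0 ≤ u → 0 ≤ Φ u ∧ W (Φ u) = η * W (u / η) := by
    intro u hu
    obtain ⟨z, hz, hzW⟩ := hWsurj _ (hηW u hu)
    have heq : Φ u = z := by
      rw [hΦdef]
      simp only
      rw [← hzW, hWinv_left z hz]
    rw [heq]
    exact ⟨hz, hzW⟩
  have hΦmono : MonotoneOn Φ (Set.Ici 0) := by
    intro a ha b hb hab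
    have h1 : W (Φ a) ≤ W (Φ b) := by
      rw [(hΦ a ha).2, (hΦ b hb).2]
      apply mul_le_mul_of_nonneg_left _ hη.le
      exact hWmono (div_nonneg ha hη.le) (div_nonneg hb hη.le)
        ((div_le_div_iff_of_pos_right hη).mpr hab)
    exact (hWstrict.le_iff_le (hΦ a ha).1 (hΦ b hb).1).mp h1
  have hΦtop : Tendsto Φ atTop atTop := by
    rw [tendsto_atTop]
    intro M
    set M' : ℝ := max M 0 with hM'def
    have h2 : Tendsto (fun u => η * W (u / η)) atTop atTop :=
      (hWtop.comp (Tendsto.atTop_div_const hη tendsto_id)).const_mul_atTop hη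
    filter_upwards [h2.eventually_ge_atTop (W M' + 1), eventually_ge_atTop 0] with u hu hu0
    have h3 : W M' < W (Φ u) := by rw [(hΦ u hu0).2]; linarith
    by_contra h
    push_neg at h
    have h4 : W (Φ u) ≤ W M' := hWmono (hΦ u hu0).1 (le_max_right M 0)
      (h.le.trans (le_max_left M 0))
    linarith
  -- W grows faster than ℓ
  have hlog2 : (0:ℝ) < Real.log 2 := Real.log_pos one_lt_two
  have hWl : Tendsto (fun x => W x / ℓ x) atTop atTop := by
    rw [tendsto_atTop]
    intro C
    obtain ⟨k, hk⟩ := exists_nat_ge (2 * C / Real.log 2)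
    have hkC : C ≤ (k : ℝ) * Real.log 2 / 2 := by
      rw [div_le_iff₀ hlog2] at hk
      linarith
    have hc : (0:ℝ) < (1/2 : ℝ)^k := by positivity
    have hslow := hl_slow ((1/2)^k) hc
    filter_upwards [hslow.eventually (eventually_ge_nhds (by norm_num : (1/2:ℝ) < 1)),
      eventually_ge_atTop (u₁ * 2^k),
      hl_inf.eventually_gt_atTop 0, eventually_gt_atTop 0] with x h1 h2 h3 hx_pos
    set a : ℝ := (1/2:ℝ)^k * x with hadef
    have ha_pos : 0 < a := mul_pos hc hx_pos
    have h2k : (0:ℝ) < 2^k := by positivity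
    have ha_u₁ : u₁ ≤ a := by
      have h2' : u₁ ≤ x / 2^k := (le_div_iff₀ h2k).mpr h2
      calc u₁ ≤ x / 2^k := h2'
        _ = (1/2:ℝ)^k * x := by
            rw [div_eq_mul_inv, mul_comm, ← inv_pow]
            norm_num
    have hax : a ≤ x := by
      rw [hadef]
      nlinarith [pow_le_one₀ (by norm_num : (0:ℝ) ≤ 1/2) (by norm_num : (1/2:ℝ) ≤ 1) (n := k)]
    have hla : ℓ x / 2 ≤ ℓ a := by
      rw [le_div_iff₀ h3] at h1
      linarith
    have hlog : Real.log x - Real.log a = k * Real.log 2 := by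
      rw [hadef, Real.log_mul (ne_of_gt hc) (ne_of_gt hx_pos), Real.log_pow]
      have : Real.log (1/2 : ℝ) = - Real.log 2 := by
        rw [one_div, Real.log_inv]
      rw [this]
      ring
    have hkey := hlb a x ha_pos hax (le_trans hu₁x₀ ha_u₁)
    have hWa : 0 ≤ W a := hWnonneg a ha_pos.le
    rw [hlog] at hkey
    have hfin : ((k:ℝ) * Real.log 2 / 2) * ℓ x ≤ W x := by
      have hkl : (0:ℝ) ≤ (k:ℝ) * Real.log 2 := by positivity
      have h5 := mul_le_mul_of_nonneg_right hla hkl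
      nlinarith
    rw [le_div_iff₀ h3]
    nlinarith [mul_le_mul_of_nonneg_right hkC h3.le]
  -- the constant c₂
  set c₂ : ℝ := (1 - η) / 4 with hc₂def
  have hc₂pos : 0 < c₂ := by rw [hc₂def]; linarith
  -- the main pointwise estimate
  have hpt : ∀ ε' : ℝ, 0 < ε' → ∀ᶠ u in atTop, ∀ L : ℝ, ℓ u ≤ L →
      1 / w u - 1 / w (u + Φ u) ≤ 2 * ε' * (Real.exp (-(c₂ / L) * W u) * (1 / w u)) := by
    intro ε' hε'
    have hE3 := (hl_slow 2 two_pos).eventually (eventually_le_nhds (by norm_num : (1:ℝ) < 2))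
    have hE4 := (hl_slow (1/η) (by positivity)).eventually
      (eventually_le_nhds (by norm_num : (1:ℝ) < 2))
    have hE5' := hWl.eventually_ge_atTop ((4 * η * Real.log (1/η)) / (1 - η))
    have hE6 : ∀ᶠ u in atTop, Real.exp (-(c₂ * (W u / ℓ u))) ≤ ε' := by
      have ht1 : Tendsto (fun u => -(c₂ * (W u / ℓ u))) atTop atBot :=
        tendsto_neg_atTop_atBot.comp (hWl.const_mul_atTop hc₂pos)
      exact (Real.tendsto_exp_atBot.comp ht1).eventually (eventually_le_nhds hε')
    filter_upwards [eventually_ge_atTop u₁, hΦtop.eventually_ge_atTop u₁, hE3, hE4, hE5',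
      hE6, hl_inf.eventually_gt_atTop 0] with u hu1 hΦu1 h3 h4 h5 h6 h7
    intro L hL
    have hu0 : 0 < u := lt_of_lt_of_le hu₁pos hu1
    have hux₀ : x₀ ≤ u := le_trans hu₁x₀ hu1
    have hΦu := hΦ u hu0.le
    have hΦpos : 0 < Φ u := lt_of_lt_of_le hu₁pos hΦu1
    have hΦx₀ : x₀ ≤ Φ u := le_trans hu₁x₀ hΦu1
    have hLpos : 0 < L := lt_of_lt_of_le h7 hL
    -- rewrite h3 h4 into usable form
    have h3' : ℓ (2 * u) ≤ 2 * ℓ u := by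
      rw [div_le_iff₀ h7] at h3
      linarith [h3]
    have h4' : ℓ (u / η) ≤ 2 * ℓ u := by
      rw [div_le_iff₀ h7] at h4
      have : (1/η) * u = u / η := by field_simp
      rw [this] at h4
      linarith [h4]
    have h5' : 4 * η * Real.log (1/η) * ℓ u ≤ (1 - η) * W u := by
      rw [le_div_iff₀ h7] at h5
      have h5'' := mul_le_mul_of_nonneg_left h5 (by linarith : (0:ℝ) ≤ 1 - η)
      have hid : (1 - η) * ((4 * η * Real.log (1/η)) / (1 - η) * ℓ u)
          = 4 * η * Real.log (1/η) * ℓ u := by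
        field_simp
        exact mul_div_cancel_left₀ _ (by linarith : (1:ℝ) - η ≠ 0)
      rw [hid] at h5''
      linarith [h5'']
    -- d1 : W(u/η) - W u ≤ 2 log(1/η) ℓ u
    have huη : u ≤ u / η := by
      rw [le_div_iff₀ hη]
      nlinarith
    have d1 : W (u / η) - W u ≤ 2 * Real.log (1/η) * ℓ u := by
      have := hub u (u / η) hu0 huη hux₀
      have hlogeq : Real.log (u / η) - Real.log u = Real.log (1/η) := by
        rw [Real.log_div (ne_of_gt hu0) (ne_of_gt hη), one_div, Real.log_inv]
        ring
      rw [hlogeq] at this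
      have hlη : 0 ≤ Real.log (1/η) := Real.log_nonneg (by rw [le_div_iff₀ hη]; linarith)
      linarith [this, mul_le_mul_of_nonneg_right h4' hlη]
    -- d2 : W u - W (Φ u) ≥ 2 c₂ W u
    have hWu0 : 0 ≤ W u := hWnonneg u hu0.le
    have d2 : 2 * c₂ * W u ≤ W u - W (Φ u) := by
      rw [hΦu.2, hc₂def]
      have hd1η := mul_le_mul_of_nonneg_left d1 hη.le
      linarith
    -- d3 : Φ u ≤ u
    have d3 : Φ u ≤ u := by
      have hWle : W (Φ u) ≤ W u := by
        have := mul_nonneg (mul_nonneg two_pos.le hc₂pos.le) hWu0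
        nlinarith [d2]
      exact (hWstrict.le_iff_le hΦu.1 hu0.le).mp hWle
    -- d4 : 2 c₂ (W u / ℓ u) ≤ log u - log (Φ u)
    have d4 : 2 * c₂ * (W u / ℓ u) ≤ Real.log u - Real.log (Φ u) := by
      have hub2 := hub (Φ u) u hΦpos d3 hΦx₀
      have heq : 2 * c₂ * (W u / ℓ u) = (2 * c₂ * W u) / ℓ u := by ring
      rw [heq, div_le_iff₀ h7, mul_comm]
      linarith
    -- d5 : Φ u ≤ u * exp(-(2 c₂ (W u / ℓ u)))
    have d5 : Φ u ≤ u * Real.exp (-(2 * c₂ * (W u / ℓ u))) := by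
      have hlogΦ : Real.log (Φ u) ≤ Real.log u - 2 * c₂ * (W u / ℓ u) := by linarith
      calc Φ u = Real.exp (Real.log (Φ u)) := (Real.exp_log hΦpos).symm
        _ ≤ Real.exp (Real.log u - 2 * c₂ * (W u / ℓ u)) := Real.exp_le_exp.mpr hlogΦ
        _ = u * Real.exp (-(2 * c₂ * (W u / ℓ u))) := by
            rw [sub_eq_add_neg, Real.exp_add, Real.exp_log hu0]
    -- d6 : ℓ(u + Φ u) ≤ 2 ℓ u
    have hx₀uΦ : x₀ ≤ u + Φ u := le_trans hux₀ (le_add_of_nonneg_right hΦu.1)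
    have d6 : ℓ (u + Φ u) ≤ 2 * ℓ u := by
      calc ℓ (u + Φ u) ≤ ℓ (2 * u) :=
            hx₀ hx₀uΦ (le_trans hux₀ (by linarith)) (by linarith)
        _ ≤ 2 * ℓ u := h3'
    -- d7 : the integrand bound
    have hwu : 0 < w u := hw_pos u hu0.le
    have huΦpos : 0 < u + Φ u := by linarith
    have hluΦ : ℓ u ≤ ℓ (u + Φ u) := hx₀ hux₀ hx₀uΦ (le_add_of_nonneg_right hΦu.1)
    have d7 : 1 / w u - 1 / w (u + Φ u) ≤ 2 * ℓ u * Φ u / (u * u) := by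
      rw [hinvw u hu0, hinvw (u + Φ u) huΦpos]
      have step1 : ℓ u / u - ℓ (u + Φ u) / (u + Φ u)
          ≤ ℓ (u + Φ u) / u - ℓ (u + Φ u) / (u + Φ u) := by
        have := (div_le_div_iff_of_pos_right hu0).mpr hluΦ
        linarith
      have step2 : ℓ (u + Φ u) / u - ℓ (u + Φ u) / (u + Φ u)
          = ℓ (u + Φ u) * Φ u / (u * (u + Φ u)) := by
        field_simp
        ring
      have step3 : ℓ (u + Φ u) * Φ u / (u * (u + Φ u)) ≤ 2 * ℓ u * Φ u / (u * u) := by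
        apply div_le_div₀ (by positivity) _ (by positivity) _
        · exact mul_le_mul_of_nonneg_right d6 hΦu.1
        · nlinarith [hΦu.1]
      linarith [step1, step2.le, step2.ge, step3]
    -- d8 : convert to exponential bound
    have d8 : 2 * ℓ u * Φ u / (u * u) ≤ 2 * Real.exp (-(2 * c₂ * (W u / ℓ u))) * (1 / w u) := by
      rw [hinvw u hu0]
      have hΦdivu : Φ u / u ≤ Real.exp (-(2 * c₂ * (W u / ℓ u))) := by
        rw [div_le_iff₀ hu0]
        linarith [d5]
      have heq2 : 2 * ℓ u * Φ u / (u * u) = 2 * (Φ u / u) * (ℓ u / u) := by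
        field_simp
      rw [heq2]
      have hlu_div : 0 ≤ ℓ u / u := le_of_lt (div_pos h7 hu0)
      calc 2 * (Φ u / u) * (ℓ u / u)
          ≤ 2 * Real.exp (-(2 * c₂ * (W u / ℓ u))) * (ℓ u / u) := by
            apply mul_le_mul_of_nonneg_right _ hlu_div
            linarith [hΦdivu]
        _ = 2 * Real.exp (-(2 * c₂ * (W u / ℓ u))) * (ℓ u / u) := rfl
    -- d9/d10 : split the exponential and compare with L
    have d9 : Real.exp (-(2 * c₂ * (W u / ℓ u))) ≤ ε' * Real.exp (-(c₂ / L) * W u) := by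
      have hsplit : Real.exp (-(2 * c₂ * (W u / ℓ u)))
          = Real.exp (-(c₂ * (W u / ℓ u))) * Real.exp (-(c₂ * (W u / ℓ u))) := by
        rw [← Real.exp_add]
        ring_nf
      rw [hsplit]
      apply mul_le_mul h6 _ (Real.exp_pos _).le (le_of_lt hε')
      apply Real.exp_le_exp.mpr
      have hdd : c₂ * W u / L ≤ c₂ * W u / ℓ u := by
        rcases eq_or_lt_of_le hWu0 with h | h
        · rw [← h]
          simp
        · exact (div_le_div_iff_of_pos_left (by positivity) hLpos h7).mpr hL
      have h10 : -(c₂ * (W u / ℓ u)) = -(c₂ * W u / ℓ u) := by ring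
      have h11 : -(c₂ / L) * W u = -(c₂ * W u / L) := by ring
      rw [h10, h11]
      exact neg_le_neg hdd
    calc 1 / w u - 1 / w (u + Φ u)
        ≤ 2 * ℓ u * Φ u / (u * u) := d7
      _ ≤ 2 * Real.exp (-(2 * c₂ * (W u / ℓ u))) * (1 / w u) := d8
      _ ≤ 2 * (ε' * Real.exp (-(c₂ / L) * W u)) * (1 / w u) := by
          apply mul_le_mul_of_nonneg_right _ (le_of_lt (one_div_pos.mpr hwu))
          have := mul_le_mul_of_nonneg_left d9 (by norm_num : (0:ℝ) ≤ 2)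
          linarith
      _ = 2 * ε' * (Real.exp (-(c₂ / L) * W u) * (1 / w u)) := by ring
  -- derivative of W
  have hWderiv : ∀ u : ℝ, 0 < u → HasDerivAt W (1 / w u) u := by
    intro u hu
    have hcw : ContinuousAt w u := hw_cont.continuousAt (Ici_mem_nhds hu)
    have h1 : ContinuousAt (fun t => 1 / w t) u :=
      continuousAt_const.div hcw (ne_of_gt (hw_pos u hu.le))
    have h2 : StronglyMeasurableAtFilter (fun t => 1 / w t) (nhds u) volume := by
      refine ⟨Set.Ioi 0, Ioi_mem_nhds hu, ?_⟩
      apply ContinuousOn.aestronglyMeasurable _ measurableSet_Ioi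
      exact ContinuousOn.div continuousOn_const (hw_cont.mono Set.Ioi_subset_Ici_self)
        (fun t ht => ne_of_gt (hw_pos t (le_of_lt ht)))
    have h3 := intervalIntegral.integral_hasDerivAt_right (hIint 0 u le_rfl hu.le) h2 h1
    apply h3.congr_of_eventuallyEq
    exact Filter.Eventually.of_forall (fun t => hW t)
  -- the comparison integrand
  set G : ℝ → ℝ := fun u => 1 / w (u + Φ u) with hGdef
  have hGanti : AntitoneOn G (Set.Ici 0) := by
    intro a ha b hb hab
    have haΦ : (0:ℝ) ≤ a + Φ a := add_nonneg ha (hΦ a ha).1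
    have hbΦ : (0:ℝ) ≤ b + Φ b := add_nonneg hb (hΦ b hb).1
    apply one_div_le_one_div_of_le (hw_pos _ haΦ)
    exact hw_mono haΦ hbΦ (add_le_add hab (hΦmono ha hb hab))
  have hGint : ∀ a b : ℝ, 0 ≤ a → 0 ≤ b → IntervalIntegrable G volume a b := by
    intro a b ha hb
    apply AntitoneOn.intervalIntegrable
    apply hGanti.mono
    intro t ht
    rcases Set.mem_uIcc.mp ht with ⟨h1, _⟩ | ⟨h1, _⟩
    · exact le_trans ha h1
    · exact le_trans hb h1
  have hGle : ∀ u : ℝ, 0 ≤ u → G u ≤ 1 / w u := by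
    intro u hu
    apply one_div_le_one_div_of_le (hw_pos u hu)
    exact hw_mono hu (add_nonneg hu (hΦ u hu).1) (le_add_of_nonneg_right (hΦ u hu).1)
  -- final argument
  rw [NormedAddCommGroup.tendsto_nhds_zero]
  intro ε hε
  set ε' : ℝ := ε * c₂ / 8 with hε'def
  have hε'pos : 0 < ε' := by rw [hε'def]; positivity
  obtain ⟨A₀, hA₀⟩ := eventually_atTop.mp (hpt ε' hε'pos)
  set A : ℝ := max A₀ u₁ with hAdef
  have hAu₁ : u₁ ≤ A := le_max_right _ _
  have hApos : 0 < A := lt_of_lt_of_le hu₁pos hAu₁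
  have hAx₀ : x₀ ≤ A := le_trans hu₁x₀ hAu₁
  set CA : ℝ := W A - ∫ u in (0:ℝ)..A, G u with hCAdef
  filter_upwards [eventually_ge_atTop A, hl_inf.eventually_ge_atTop (2 * |CA| / ε + 1),
    hl_inf.eventually_gt_atTop 0] with x hxA hlx hlxpos
  have hx0 : (0:ℝ) ≤ x := le_trans hApos.le hxA
  set L : ℝ := ℓ x with hLdef
  have hLpos : 0 < L := hlxpos
  -- the numerator equals CA plus a tail integral
  have e1 : W x - W A = ∫ u in A..x, 1 / w u := hWd A x hApos.le hx0
  have e2 : (∫ u in (0:ℝ)..x, G u) - ∫ u in (0:ℝ)..A, G u = ∫ u in A..x, G u :=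
    intervalIntegral.integral_interval_sub_left (hGint 0 x le_rfl hx0) (hGint 0 A le_rfl hApos.le)
  have e3 : ∫ u in A..x, (1 / w u - G u)
      = (∫ u in A..x, 1 / w u) - ∫ u in A..x, G u :=
    intervalIntegral.integral_sub (hIint A x hApos.le hx0) (hGint A x hApos.le hx0)
  -- nonnegativity of the numerator
  have hN0 : 0 ≤ W x - ∫ u in (0:ℝ)..x, G u := by
    have e4 : ∫ u in (0:ℝ)..x, (1 / w u - G u)
        = (∫ u in (0:ℝ)..x, 1 / w u) - ∫ u in (0:ℝ)..x, G u :=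
      intervalIntegral.integral_sub (hIint 0 x le_rfl hx0) (hGint 0 x le_rfl hx0)
    have e5 : (0:ℝ) ≤ ∫ u in (0:ℝ)..x, (1 / w u - G u) := by
      apply intervalIntegral.integral_nonneg hx0
      intro t ht
      have := hGle t ht.1
      linarith
    rw [hW x]
    linarith [e4.symm.le, e4.le, e5]
  -- continuity of the majorant integrand
  have hcontE : ContinuousOn (fun u => Real.exp (-(c₂ / L) * W u) * (1 / w u))
      (Set.uIcc A x) := by
    intro u hu
    rw [Set.uIcc_of_le hxA] at hu
    have hu0 : 0 < u := lt_of_lt_of_le hApos hu.1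
    apply ContinuousAt.continuousWithinAt
    apply ContinuousAt.mul
    · exact Real.continuous_exp.continuousAt.comp
        (continuousAt_const.mul ((hWderiv u hu0).continuousAt))
    · exact continuousAt_const.div (hw_cont.continuousAt (Ici_mem_nhds hu0))
        (ne_of_gt (hw_pos u hu0.le))
  -- FTC evaluation of the majorant integral
  have hFTC : ∫ u in A..x, Real.exp (-(c₂ / L) * W u) * (1 / w u)
      = (L / c₂) * (Real.exp (-(c₂ / L) * W A) - Real.exp (-(c₂ / L) * W x)) := by
    have hderivF : ∀ u ∈ Set.uIcc A x, HasDerivAt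
        (fun t => -(L / c₂) * Real.exp (-(c₂ / L) * W t))
        (Real.exp (-(c₂ / L) * W u) * (1 / w u)) u := by
      intro u hu
      rw [Set.uIcc_of_le hxA] at hu
      have hu0 : 0 < u := lt_of_lt_of_le hApos hu.1
      have hd1 : HasDerivAt (fun t => -(c₂ / L) * W t) (-(c₂ / L) * (1 / w u)) u :=
        (hWderiv u hu0).const_mul _
      have hd2 := (hd1.exp).const_mul (-(L / c₂))
      have hc₂ne : c₂ ≠ 0 := ne_of_gt hc₂pos
      have hLne : L ≠ 0 := ne_of_gt hLpos
      have hone : (L / c₂) * (c₂ / L) = 1 := by field_simp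
      refine hd2.congr_deriv (Eq.symm ?_)
      calc Real.exp (-(c₂ / L) * W u) * (1 / w u)
          = ((L / c₂) * (c₂ / L)) * (Real.exp (-(c₂ / L) * W u) * (1 / w u)) := by
            rw [hone]; ring
        _ = -(L / c₂) * (Real.exp (-(c₂ / L) * W u) * (-(c₂ / L) * (1 / w u))) := by ring
    rw [intervalIntegral.integral_eq_sub_of_hasDerivAt hderivF
      (hcontE.intervalIntegrable)]
    ring
  -- compare the tail integral with the majorant
  have hcomp : (∫ u in A..x, (1 / w u - G u))
      ≤ ∫ u in A..x, 2 * ε' * (Real.exp (-(c₂ / L) * W u) * (1 / w u)) := by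
    apply intervalIntegral.integral_mono_on hxA
      ((hIint A x hApos.le hx0).sub (hGint A x hApos.le hx0))
      ((continuousOn_const.mul hcontE).intervalIntegrable)
    intro u hu
    have huA₀ : A₀ ≤ u := le_trans (le_max_left _ _) hu.1
    have hlul : ℓ u ≤ L := hx₀ (le_trans hAx₀ hu.1)
      (le_trans hAx₀ (le_trans hu.1 hu.2)) hu.2
    exact hA₀ u huA₀ L hlul
  -- evaluate the majorant integral
  have hmaj_val : (∫ u in A..x, 2 * ε' * (Real.exp (-(c₂ / L) * W u) * (1 / w u)))
      ≤ ε / 4 * L := by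
    rw [intervalIntegral.integral_const_mul, hFTC]
    have hexpA : Real.exp (-(c₂ / L) * W A) ≤ 1 := by
      rw [Real.exp_le_one_iff]
      have : 0 ≤ c₂ / L := le_of_lt (div_pos hc₂pos hLpos)
      nlinarith [hWnonneg A hApos.le]
    have hexpx : 0 < Real.exp (-(c₂ / L) * W x) := Real.exp_pos _
    have hLC : 0 ≤ L / c₂ := le_of_lt (div_pos hLpos hc₂pos)
    have h1 : (L / c₂) * (Real.exp (-(c₂ / L) * W A) - Real.exp (-(c₂ / L) * W x))
        ≤ L / c₂ := by nlinarith
    calc 2 * ε' * ((L / c₂) * (Real.exp (-(c₂ / L) * W A) - Real.exp (-(c₂ / L) * W x)))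
        ≤ 2 * ε' * (L / c₂) := by
          apply mul_le_mul_of_nonneg_left h1 (by positivity)
      _ = ε / 4 * L := by
          have hc₂ne : c₂ ≠ 0 := ne_of_gt hc₂pos
          rw [hε'def]
          field_simp
          ring
  -- put everything together
  have hfinal : W x - (∫ u in (0:ℝ)..x, G u) ≤ CA + ε / 4 * L := by
    have := hcomp
    rw [e3] at this
    linarith [e1, e2, hmaj_val]
  have hCA : CA ≤ ε / 2 * L := by
    have habs : |CA| ≤ ε / 2 * L := by
      have h2 := mul_le_mul_of_nonneg_left hlx (le_of_lt (half_pos hε))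
      have hid2 : ε / 2 * (2 * |CA| / ε + 1) = |CA| + ε / 2 := by
        field_simp
      rw [hid2] at h2
      linarith
    linarith [le_abs_self CA]
  have hG_raw : (∫ u in (0:ℝ)..x, 1 / w (u + Winv (η * W (u / η))))
      = ∫ u in (0:ℝ)..x, G u := by
    simp only [hGdef, hΦdef]
  rw [Real.norm_eq_abs, hG_raw, abs_of_nonneg (div_nonneg hN0 hLpos.le), div_lt_iff₀ hLpos]
  nlinarith [mul_pos hε hLpos]
end

section
/- Set h(x) := log W^{-1}(x), so that h'(x) = 1/ℓ(W^{-1}(x)), and define J_η(x) := ∫₀ˣ W^{-1}(ηu)/W^{-1}(u) du for η ∈ (0,1). Then h'(x)·J_η(x) → 0 as x → ∞; equivalently, J_η(x) = o(ℓ(W^{-1}(x))). -/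
open Filter MeasureTheory

set_option maxHeartbeats 2000000 in
/-- With `h(x) = log W⁻¹(x)` (so `h'(x) = 1/ℓ(W⁻¹(x))`) and
`J_η(x) = ∫₀ˣ W⁻¹(ηu)/W⁻¹(u) du` for `η ∈ (0,1)`, one has
`h'(x)·J_η(x) → 0`, i.e. `J_η(x) = o(ℓ(W⁻¹(x)))` as `x → ∞`. -/
theorem J_eta_littleO
(w ℓ W : ℝ → ℝ)
    (hw_cont : ContinuousOn w (Set.Ici 0))
    (hw_pos : ∀ x, 0 ≤ x → 0 < w x)
    (hw_mono : MonotoneOn w (Set.Ici 0))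
    (hwl : ∀ x, 0 < x → w x = x / ℓ x)
    (hl_slow : ∀ c, 0 < c → Tendsto (fun x => ℓ (c * x) / ℓ x) atTop (nhds 1))
    (hl_inf : Tendsto ℓ atTop atTop)
    (hW : ∀ x, W x = ∫ u in (0:ℝ)..x, 1 / w u)
    (Winv : ℝ → ℝ)
    (hWinv_left : ∀ x, 0 ≤ x → Winv (W x) = x)
    (hWinv_right : ∀ x, 0 ≤ x → W (Winv x) = x)
    (hl_mono : ∃ x₀ : ℝ, MonotoneOn ℓ (Set.Ici x₀))
    (η : ℝ) (hη : 0 < η) (hη1 : η < 1) :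
    Tendsto
      (fun x => (∫ u in (0:ℝ)..x, Winv (η * u) / Winv u) / ℓ (Winv x))
      atTop (nhds 0) := by
  obtain ⟨x₀', hx₀'⟩ := hl_mono
  set x₀ : ℝ := max x₀' 1 with hx₀def
  have hx₀1 : (1:ℝ) ≤ x₀ := le_max_right _ _
  have hx₀0 : (0:ℝ) < x₀ := lt_of_lt_of_le one_pos hx₀1
  have hℓmono : MonotoneOn ℓ (Set.Ici x₀) :=
    hx₀'.mono (Set.Ici_subset_Ici.mpr (le_max_left _ _))
  -- positivity of 1/w
  have hw0 : ∀ u : ℝ, 0 ≤ u → 0 < 1 / w u := fun u hu => by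
    have := hw_pos u hu; positivity
  -- ℓ positivity and formula for 1/w
  have hℓpos : ∀ s : ℝ, 0 < s → 0 < ℓ s := by
    intro s hs
    have hws := hw_pos s hs.le
    rcases lt_trichotomy (ℓ s) 0 with h | h | h
    · rw [hwl s hs] at hws
      have : s / ℓ s < 0 := div_neg_of_pos_of_neg hs h
      linarith
    · rw [hwl s hs, h, div_zero] at hws; exact absurd hws (lt_irrefl 0)
    · exact h
  have hinv : ∀ s : ℝ, 0 < s → 1 / w s = ℓ s / s := by
    intro s hs
    rw [hwl s hs]
    rw [one_div_div]
  -- continuity of 1/w on Ici 0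
  have hcont : ContinuousOn (fun u => 1 / w u) (Set.Ici 0) :=
    continuousOn_const.div hw_cont (fun u hu => (hw_pos u hu).ne')
  -- interval integrability
  have hWint : ∀ a b : ℝ, 0 ≤ a → IntervalIntegrable (fun u => 1 / w u) volume a b → True := fun _ _ _ _ => trivial
  have hWint : ∀ a b : ℝ, 0 ≤ a → 0 ≤ b →
      IntervalIntegrable (fun u => 1 / w u) volume a b := by
    intro a b ha hb
    apply ContinuousOn.intervalIntegrable
    apply hcont.mono
    intro u hu
    simp only [Set.mem_Ici]
    rcases le_total a b with h | h
    · rw [Set.uIcc_of_le h] at hu; exact le_trans ha hu.1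
    · rw [Set.uIcc_of_ge h] at hu; exact le_trans hb hu.1
  have hWsub : ∀ a b : ℝ, 0 ≤ a → a ≤ b → W b - W a = ∫ u in a..b, 1 / w u := by
    intro a b ha hab
    have h1 := intervalIntegral.integral_add_adjacent_intervals
      (hWint 0 a le_rfl ha) (hWint a b ha (le_trans ha hab))
    rw [← hW a, ← hW b] at h1
    linarith
  have W0 : W 0 = 0 := by rw [hW]; simp
  have hWlt : ∀ a b : ℝ, 0 ≤ a → a < b → W a < W b := by
    intro a b ha hab
    have hpos : 0 < ∫ u in a..b, 1 / w u :=
      intervalIntegral.intervalIntegral_pos_of_pos_on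
        (hWint a b ha (le_trans ha hab.le))
        (fun u hu => hw0 u (le_trans ha hu.1.le)) hab
    have := hWsub a b ha hab.le
    linarith
  have hWmono : ∀ a b : ℝ, 0 ≤ a → a ≤ b → W a ≤ W b := by
    intro a b ha hab
    rcases eq_or_lt_of_le hab with h | h
    · rw [h]
    · exact (hWlt a b ha h).le
  have hWnn : ∀ a : ℝ, 0 ≤ a → 0 ≤ W a := by
    intro a ha
    have := hWmono 0 a le_rfl ha
    rw [W0] at this; exact this
  -- W tends to infinity
  have hN₀ : ∃ N₀ : ℝ, 1 ≤ N₀ ∧ ∀ s, N₀ ≤ s → 1 ≤ ℓ s := by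
    obtain ⟨N, hN⟩ := eventually_atTop.mp (hl_inf.eventually_ge_atTop 1)
    exact ⟨max N 1, le_max_right _ _, fun s hs => hN s (le_trans (le_max_left _ _) hs)⟩
  obtain ⟨N₀, hN₀1, hN₀⟩ := hN₀
  have hN₀0 : (0:ℝ) < N₀ := lt_of_lt_of_le one_pos hN₀1
  have hWtop : Tendsto W atTop atTop := by
    have hlog : Tendsto (fun b => W N₀ + (Real.log b - Real.log N₀)) atTop atTop := by
      apply tendsto_atTop_add_const_left
      apply tendsto_atTop_add_const_right
      exact Real.tendsto_log_atTop
    apply tendsto_atTop_mono' atTop _ hlog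
    filter_upwards [eventually_ge_atTop N₀] with b hb
    have hint : ∫ u in N₀..b, 1 / u = Real.log b - Real.log N₀ := by
      rw [integral_one_div_of_pos hN₀0 (lt_of_lt_of_le hN₀0 hb)]
      rw [Real.log_div (ne_of_gt (lt_of_lt_of_le hN₀0 hb)) (ne_of_gt hN₀0)]
    have hmono : ∫ u in N₀..b, 1 / u ≤ ∫ u in N₀..b, 1 / w u := by
      apply intervalIntegral.integral_mono_on hb
      · apply ContinuousOn.intervalIntegrable
        apply ContinuousOn.mono (f := fun u : ℝ => 1 / u)
          (continuousOn_const.div continuousOn_id (fun u hu => ne_of_gt hu))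
        rw [Set.uIcc_of_le hb]
        intro u hu; exact lt_of_lt_of_le hN₀0 hu.1
      · exact hWint N₀ b hN₀0.le (le_trans hN₀0.le hb)
      · intro u hu
        have hu0 : 0 < u := lt_of_lt_of_le hN₀0 hu.1
        rw [hinv u hu0]
        have h1 : 1 ≤ ℓ u := hN₀ u hu.1
        rw [div_le_div_iff₀ hu0 hu0]
        nlinarith
    have := hWsub N₀ b hN₀0.le hb
    linarith [hint ▸ hmono]
  -- continuity of W on nonneg intervals, surjectivity
  have hWcont : ∀ b : ℝ, 0 ≤ b → ContinuousOn W (Set.Icc 0 b) := by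
    intro b hb
    have h1 : ContinuousOn (fun x => ∫ u in (0:ℝ)..x, 1 / w u) (Set.uIcc 0 b) :=
      intervalIntegral.continuousOn_primitive_interval
        (by
          rw [Set.uIcc_of_le hb]
          exact (hcont.mono (Set.Icc_subset_Ici_self)).integrableOn_compact isCompact_Icc)
    rw [Set.uIcc_of_le hb] at h1
    exact ContinuousOn.congr h1 (fun x _ => hW x)
  have hsurj : ∀ v : ℝ, 0 ≤ v → ∃ t, 0 ≤ t ∧ W t = v := by
    intro v hv
    obtain ⟨b', hb'⟩ := eventually_atTop.mp (hWtop.eventually_ge_atTop v)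
    set b := max b' 0 with hbdef
    have hb0 : 0 ≤ b := le_max_right _ _
    have hbv : v ≤ W b := hb' b (le_max_left _ _)
    have := intermediate_value_Icc hb0 (hWcont b hb0)
    have hmem : v ∈ Set.Icc (W 0) (W b) := by
      rw [W0]; exact ⟨hv, hbv⟩
    obtain ⟨t, ht, hWt⟩ := this hmem
    exact ⟨t, ht.1, hWt⟩
  -- Winv facts
  have hWinv_nn : ∀ v : ℝ, 0 ≤ v → 0 ≤ Winv v := by
    intro v hv
    obtain ⟨t, ht, hWt⟩ := hsurj v hv
    rw [← hWt, hWinv_left t ht]; exact ht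
  have hWinv_mono : ∀ a b : ℝ, 0 ≤ a → a ≤ b → Winv a ≤ Winv b := by
    intro a b ha hab
    by_contra h
    push_neg at h
    have hb : 0 ≤ b := le_trans ha hab
    have := hWlt (Winv b) (Winv a) (hWinv_nn b hb) h
    rw [hWinv_right a ha, hWinv_right b hb] at this
    linarith
  have hWinv0 : Winv 0 = 0 := by
    have := hWinv_left 0 le_rfl
    rw [W0] at this; exact this
  have hWinv_pos : ∀ v : ℝ, 0 < v → 0 < Winv v := by
    intro v hv
    rcases eq_or_lt_of_le (hWinv_nn v hv.le) with h | h
    · exfalso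
      have := hWinv_right v hv.le
      rw [← h, W0] at this
      linarith
    · exact h
  have hWinv_top : Tendsto Winv atTop atTop := by
    rw [tendsto_atTop]
    intro M
    filter_upwards [eventually_ge_atTop (W (max M 0))] with v hv
    have h1 : Winv (W (max M 0)) ≤ Winv v :=
      hWinv_mono _ _ (hWnn _ (le_max_right _ _)) hv
    rw [hWinv_left _ (le_max_right _ _)] at h1
    exact le_trans (le_max_left _ _) h1
  -- key growth estimate : A * ℓ(Winv u) ≤ u eventually
  have hAL : ∀ A : ℝ, 0 < A → ∀ᶠ u in atTop, A * ℓ (Winv u) ≤ u := by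
    intro A hA
    set c₁ : ℝ := Real.exp (-(2 * A)) with hc₁def
    have hc₁0 : 0 < c₁ := Real.exp_pos _
    have hc₁1 : c₁ < 1 := Real.exp_lt_one_iff.mpr (by linarith)
    have hrat := (hl_slow c₁ hc₁0).eventually (eventually_gt_nhds (show (1:ℝ)/2 < 1 by norm_num))
    obtain ⟨y₁, hy₁⟩ := eventually_atTop.mp hrat
    set Y : ℝ := max (max y₁ (x₀ / c₁)) 1 with hYdef
    have hclaim : ∀ y : ℝ, Y ≤ y → A * ℓ y ≤ W y := by
      intro y hy
      have hy1 : (1:ℝ) ≤ y := le_trans (le_max_right _ _) hy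
      have hy0 : 0 < y := lt_of_lt_of_le one_pos hy1
      have hcy : x₀ ≤ c₁ * y := by
        have h1 : x₀ / c₁ ≤ y := le_trans (le_trans (le_max_right _ _) (le_max_left _ _)) hy
        rw [div_le_iff₀ hc₁0] at h1
        linarith [h1]
      have hcy0 : 0 < c₁ * y := lt_of_lt_of_le hx₀0 hcy
      have hcyy : c₁ * y ≤ y := by nlinarith
      have hratio : ℓ y / 2 < ℓ (c₁ * y) := by
        have h1 := hy₁ y (le_trans (le_trans (le_max_left _ _) (le_max_left _ _)) hy)
        have hℓy : 0 < ℓ y := hℓpos y hy0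
        rw [lt_div_iff₀ hℓy] at h1
        linarith [h1]
      -- integral comparison
      have hmono : ∫ s in (c₁*y)..y, ℓ (c₁*y) * (1/s) ≤ ∫ s in (c₁*y)..y, 1 / w s := by
        apply intervalIntegral.integral_mono_on hcyy
        · apply ContinuousOn.intervalIntegrable
          apply ContinuousOn.mul continuousOn_const
          apply ContinuousOn.mono (f := fun s : ℝ => 1 / s)
            (continuousOn_const.div continuousOn_id (fun u hu => ne_of_gt hu))
          rw [Set.uIcc_of_le hcyy]
          intro s hs; exact lt_of_lt_of_le hcy0 hs.1
        · exact hWint (c₁*y) y hcy0.le hy0.le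
        · intro s hs
          have hs0 : 0 < s := lt_of_lt_of_le hcy0 hs.1
          rw [hinv s hs0]
          have hℓs : ℓ (c₁*y) ≤ ℓ s := hℓmono hcy (le_trans hcy hs.1) hs.1
          rw [mul_one_div, div_le_div_iff₀ hs0 hs0]
          nlinarith
      have hint : ∫ s in (c₁*y)..y, ℓ (c₁*y) * (1/s) = ℓ (c₁*y) * (2*A) := by
        rw [intervalIntegral.integral_const_mul, integral_one_div_of_pos hcy0 hy0]
        congr 1
        rw [show y / (c₁ * y) = c₁⁻¹ by field_simp [mul_comm]]
        rw [Real.log_inv, hc₁def, Real.log_exp]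
        ring
      have hsub := hWsub (c₁*y) y hcy0.le hcyy
      have hWcy : 0 ≤ W (c₁*y) := hWnn _ hcy0.le
      nlinarith [hint ▸ hmono]
    filter_upwards [hWinv_top.eventually_ge_atTop Y, eventually_ge_atTop (0:ℝ)] with u h1 h2
    have := hclaim (Winv u) h1
    rw [hWinv_right u h2] at this
    exact this
  -- pointwise decay bound
  have hptw : ∀ u : ℝ, 0 < u → W x₀ ≤ η * u →
      Winv (η * u) / Winv u ≤ Real.exp (-((1 - η) * u) / ℓ (Winv u)) := by
    intro u hu hηu
    set z := Winv (η * u) with hzdef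
    set y := Winv u with hydef
    have hηu0 : 0 ≤ η * u := le_of_lt (mul_pos hη hu)
    have hz : x₀ ≤ z := by
      have h1 := hWinv_mono (W x₀) (η * u) (hWnn x₀ hx₀0.le) hηu
      rw [hWinv_left x₀ hx₀0.le] at h1
      exact h1
    have hz0 : 0 < z := lt_of_lt_of_le hx₀0 hz
    have hzy : z ≤ y := hWinv_mono (η*u) u hηu0 (by nlinarith)
    have hy0 : 0 < y := lt_of_lt_of_le hz0 hzy
    have hℓy : 0 < ℓ y := hℓpos y hy0
    have hWy : W y = u := hWinv_right u hu.le
    have hWz : W z = η * u := hWinv_right (η*u) hηu0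
    have hkey : (1 - η) * u = ∫ s in z..y, 1 / w s := by
      have := hWsub z y hz0.le hzy
      rw [hWy, hWz] at this
      linarith
    have hbound : ∫ s in z..y, 1 / w s ≤ ℓ y * Real.log (y / z) := by
      have hmono : ∫ s in z..y, 1 / w s ≤ ∫ s in z..y, ℓ y * (1/s) := by
        apply intervalIntegral.integral_mono_on hzy
        · exact hWint z y hz0.le hy0.le
        · apply ContinuousOn.intervalIntegrable
          apply ContinuousOn.mul continuousOn_const
          apply ContinuousOn.mono (f := fun s : ℝ => 1 / s)
            (continuousOn_const.div continuousOn_id (fun v hv => ne_of_gt hv))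
          rw [Set.uIcc_of_le hzy]
          intro s hs; exact lt_of_lt_of_le hz0 hs.1
        · intro s hs
          have hs0 : 0 < s := lt_of_lt_of_le hz0 hs.1
          rw [hinv s hs0]
          have hℓs : ℓ s ≤ ℓ y := hℓmono (le_trans hz hs.1) (le_trans hz hzy) hs.2
          rw [mul_one_div, div_le_div_iff₀ hs0 hs0]
          nlinarith
      rw [intervalIntegral.integral_const_mul, integral_one_div_of_pos hz0 hy0] at hmono
      exact hmono
    have hlog : ((1 - η) * u) / ℓ y ≤ Real.log y - Real.log z := by
      rw [← Real.log_div (ne_of_gt hy0) (ne_of_gt hz0)]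
      rw [div_le_iff₀ hℓy]
      rw [hkey]
      linarith [hbound]
    have hzy' : z / y = Real.exp (Real.log z - Real.log y) := by
      rw [Real.exp_sub, Real.exp_log hz0, Real.exp_log hy0]
    rw [hzy']
    apply Real.exp_le_exp.mpr
    rw [neg_div]
    linarith [hlog]
  -- bounds on g
  have hg01 : ∀ u : ℝ, 0 ≤ u → 0 ≤ Winv (η * u) / Winv u ∧ Winv (η * u) / Winv u ≤ 1 := by
    intro u hu
    rcases eq_or_lt_of_le hu with h | h
    · rw [← h]; simp [hWinv0]
    · have hy0 : 0 < Winv u := hWinv_pos u h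
      have hz0 : 0 ≤ Winv (η * u) := hWinv_nn _ (le_of_lt (mul_pos hη h))
      constructor
      · positivity
      · rw [div_le_one hy0]
        exact hWinv_mono (η*u) u (le_of_lt (mul_pos hη h)) (by nlinarith)
  -- measurability and integrability of g
  have hVmono : Monotone (fun u : ℝ => Winv (max u 0)) := by
    intro a b hab
    exact hWinv_mono (max a 0) (max b 0) (le_max_right _ _) (max_le_max hab le_rfl)
  have hGmeas : Measurable (fun u : ℝ => Winv (max (η * u) 0) / Winv (max u 0)) := by
    apply Measurable.div
    · exact hVmono.measurable.comp (measurable_id.const_mul η)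
    · exact hVmono.measurable
  have gint : ∀ a b : ℝ, 0 ≤ a → a ≤ b →
      IntervalIntegrable (fun u => Winv (η * u) / Winv u) volume a b := by
    intro a b ha hab
    rw [intervalIntegrable_iff_integrableOn_Ioc_of_le hab]
    refine Integrable.mono' (integrable_const 1) ?_ ?_
    · apply AEStronglyMeasurable.congr hGmeas.aestronglyMeasurable.restrict
      rw [Filter.EventuallyEq, ae_restrict_iff' measurableSet_Ioc]
      apply ae_of_all
      intro u hu
      have hu0 : 0 ≤ u := le_trans ha hu.1.le
      rw [max_eq_left hu0, max_eq_left (by positivity : 0 ≤ η * u)]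
    · rw [ae_restrict_iff' measurableSet_Ioc]
      apply ae_of_all
      intro u hu
      obtain ⟨h1, h2⟩ := hg01 u (le_trans ha hu.1.le)
      rw [Real.norm_eq_abs, abs_of_nonneg h1]
      exact h2
  -- main argument
  set c : ℝ := 1 - η with hcdef
  have hc : 0 < c := by rw [hcdef]; linarith
  rw [NormedAddCommGroup.tendsto_nhds_zero]
  intro ε hε
  have hε6 : 0 < ε / 6 := by linarith
  -- choose B
  have hexp0 : Tendsto (fun B : ℝ => Real.exp (-(c * B)) / c) atTop (nhds 0) := by
    have h1 : Tendsto (fun B : ℝ => -(c * B)) atTop atBot := by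
      apply tendsto_neg_atBot_iff.mpr
      exact (tendsto_id.const_mul_atTop hc)
    have h2 := Real.tendsto_exp_atBot.comp h1
    have h3 := h2.div_const c
    simpa using h3
  obtain ⟨B₀, hB₀⟩ := eventually_atTop.mp
    (hexp0.eventually (eventually_lt_nhds hε6))
  set B : ℝ := max B₀ 1 with hBdef
  have hB1 : (1:ℝ) ≤ B := le_max_right _ _
  have hB0 : (0:ℝ) < B := lt_of_lt_of_le one_pos hB1
  have hB : Real.exp (-(c * B)) / c < ε / 6 := by
    simpa using hB₀ B (le_max_left _ _)
  -- choose A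
  have hexpA : Tendsto (fun A : ℝ => B * Real.exp (-(c * A))) atTop (nhds 0) := by
    have h1 : Tendsto (fun A : ℝ => -(c * A)) atTop atBot := by
      apply tendsto_neg_atBot_iff.mpr
      exact (tendsto_id.const_mul_atTop hc)
    have h2 := (Real.tendsto_exp_atBot.comp h1).const_mul B
    simpa using h2
  obtain ⟨A₀, hA₀⟩ := eventually_atTop.mp
    (hexpA.eventually (eventually_lt_nhds hε6))
  set A : ℝ := max A₀ B with hAdef
  have hAB : B ≤ A := le_max_right _ _
  have hA0 : (0:ℝ) < A := lt_of_lt_of_le hB0 hAB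
  have hA : B * Real.exp (-(c * A)) < ε / 6 := by
    simpa using hA₀ A (le_max_left _ _)
  -- choose T
  obtain ⟨T₂, hT₂⟩ := eventually_atTop.mp (hAL A hA0)
  set T : ℝ := max (max T₂ (W x₀ / η)) 1 with hTdef
  have hT1 : (1:ℝ) ≤ T := le_max_right _ _
  have hT0 : (0:ℝ) < T := lt_of_lt_of_le one_pos hT1
  have hTW : W x₀ / η ≤ T := le_trans (le_max_right _ _) (le_max_left _ _)
  have hTu : ∀ u : ℝ, T ≤ u → W x₀ ≤ η * u := by
    intro u hu
    have h1 : W x₀ / η ≤ u := le_trans hTW hu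
    rw [div_le_iff₀ hη] at h1
    linarith [h1]
  have hTA : ∀ u : ℝ, T ≤ u → A * ℓ (Winv u) ≤ u := fun u hu =>
    hT₂ u (le_trans (le_trans (le_max_left _ _) (le_max_left _ _)) hu)
  have hTWx₀ : ∀ u : ℝ, T ≤ u → W x₀ ≤ u := by
    intro u hu
    have h1 := hTu u hu
    have hu0 : 0 < u := lt_of_lt_of_le hT0 hu
    have h2 : η * u ≤ 1 * u := mul_le_mul_of_nonneg_right hη1.le hu0.le
    linarith
  -- key: ℓ(Winv u) facts for u ≥ T
  have hLx₀ : ∀ u : ℝ, T ≤ u → x₀ ≤ Winv u := by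
    intro u hu
    have h1 := hWinv_mono (W x₀) u (hWnn x₀ hx₀0.le) (hTWx₀ u hu)
    rw [hWinv_left x₀ hx₀0.le] at h1
    exact h1
  have hLpos : ∀ u : ℝ, T ≤ u → 0 < ℓ (Winv u) := fun u hu =>
    hℓpos _ (lt_of_lt_of_le hx₀0 (hLx₀ u hu))
  have hLmono : ∀ u v : ℝ, T ≤ u → u ≤ v → ℓ (Winv u) ≤ ℓ (Winv v) := by
    intro u v hu huv
    exact hℓmono (hLx₀ u hu) (hLx₀ v (le_trans hu huv))
      (hWinv_mono u v (le_trans hT0.le hu) huv)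
  -- pointwise bound for u ≥ T
  have hgdecay : ∀ u : ℝ, T ≤ u →
      Winv (η * u) / Winv u ≤ Real.exp (-(c * u) / ℓ (Winv u)) := by
    intro u hu
    have h1 := hptw u (lt_of_lt_of_le hT0 hu) (hTu u hu)
    have : -((1 - η) * u) = -(c * u) := by rw [hcdef]
    rw [this] at h1
    exact h1
  -- the eventual estimate
  have hLtop : Tendsto (fun x => ℓ (Winv x)) atTop atTop := hl_inf.comp hWinv_top
  filter_upwards [hLtop.eventually_ge_atTop (max (6 * T / ε) (T / B)),
    hAL A hA0, eventually_ge_atTop T] with x hL1 hAx hxT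
  set K : ℝ := ℓ (Winv x) with hKdef
  have hK6 : 6 * T / ε ≤ K := le_trans (le_max_left _ _) hL1
  have hKTB : T / B ≤ K := le_trans (le_max_right _ _) hL1
  have hK0 : 0 < K := lt_of_lt_of_le (by positivity) hK6
  have hTBK : T ≤ B * K := by
    rw [div_le_iff₀ hB0] at hKTB
    linarith [hKTB]
  have hBKx : B * K ≤ x :=
    le_trans (mul_le_mul_of_nonneg_right hAB hK0.le) hAx
  have h0T : (0:ℝ) ≤ T := hT0.le
  have hx0 : (0:ℝ) ≤ x := le_trans h0T hxT
  -- split the integral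
  set g : ℝ → ℝ := fun u => Winv (η * u) / Winv u with hgdef
  have i1 : IntervalIntegrable g volume 0 T := gint 0 T le_rfl h0T
  have i2 : IntervalIntegrable g volume T (B * K) := gint T (B*K) h0T hTBK
  have i3 : IntervalIntegrable g volume (B * K) x :=
    gint (B*K) x (le_trans h0T hTBK) hBKx
  have hsplit : ∫ u in (0:ℝ)..x, g u =
      (∫ u in (0:ℝ)..T, g u) + (∫ u in T..(B*K), g u) + (∫ u in (B*K)..x, g u) := by
    rw [← intervalIntegral.integral_add_adjacent_intervals i1 (i2.trans i3),
      ← intervalIntegral.integral_add_adjacent_intervals i2 i3]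
    ring
  -- bound 1
  have hb1 : ∫ u in (0:ℝ)..T, g u ≤ ε / 6 * K := by
    have h1 : ∫ u in (0:ℝ)..T, g u ≤ ∫ u in (0:ℝ)..T, (1:ℝ) := by
      apply intervalIntegral.integral_mono_on h0T i1 intervalIntegrable_const
      exact fun u hu => (hg01 u hu.1).2
    rw [intervalIntegral.integral_const] at h1
    simp only [smul_eq_mul, mul_one, sub_zero] at h1
    have h2 : T ≤ ε / 6 * K := by
      rw [div_le_iff₀ hε] at hK6
      linarith [hK6]
    linarith
  -- bound 2
  have hb2 : ∫ u in T..(B*K), g u ≤ ε / 6 * K := by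
    have h1 : ∫ u in T..(B*K), g u ≤ ∫ u in T..(B*K), Real.exp (-(c * A)) := by
      apply intervalIntegral.integral_mono_on hTBK i2 intervalIntegrable_const
      intro u hu
      have hgd := hgdecay u hu.1
      have hLu : 0 < ℓ (Winv u) := hLpos u hu.1
      have hAu : A * ℓ (Winv u) ≤ u := hTA u hu.1
      have h2 : c * A ≤ c * u / ℓ (Winv u) := by
        rw [le_div_iff₀ hLu]
        have h2a := mul_le_mul_of_nonneg_left hAu hc.le
        linarith
      calc g u ≤ Real.exp (-(c * u) / ℓ (Winv u)) := hgd
        _ ≤ Real.exp (-(c * A)) := by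
            apply Real.exp_le_exp.mpr
            rw [neg_div]
            linarith
    rw [intervalIntegral.integral_const] at h1
    simp only [smul_eq_mul] at h1
    have h2 : (B * K - T) * Real.exp (-(c * A)) ≤ B * Real.exp (-(c * A)) * K := by
      have he : (0:ℝ) ≤ Real.exp (-(c * A)) := (Real.exp_pos _).le
      have h2a : (B * K - T) * Real.exp (-(c * A)) ≤ (B * K) * Real.exp (-(c * A)) :=
        mul_le_mul_of_nonneg_right (by linarith) he
      have h2b : (B * K) * Real.exp (-(c * A)) = B * Real.exp (-(c * A)) * K := by ring
      linarith
    have h3 : B * Real.exp (-(c * A)) * K ≤ ε / 6 * K :=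
      mul_le_mul_of_nonneg_right hA.le hK0.le
    linarith
  -- bound 3
  have hb3 : ∫ u in (B*K)..x, g u ≤ ε / 6 * K := by
    have hKne : K ≠ 0 := ne_of_gt hK0
    have hcne : c ≠ 0 := ne_of_gt hc
    have h1 : ∫ u in (B*K)..x, g u ≤ ∫ u in (B*K)..x, Real.exp (-c / K * u) := by
      apply intervalIntegral.integral_mono_on hBKx i3
      · apply Continuous.intervalIntegrable
        exact Real.continuous_exp.comp (continuous_const.mul continuous_id)
      · intro u hu
        have huT : T ≤ u := le_trans hTBK hu.1
        have hLu : 0 < ℓ (Winv u) := hLpos u huT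
        have hLuK : ℓ (Winv u) ≤ K := hLmono u x huT hu.2
        have hgd := hgdecay u huT
        have hcu : 0 ≤ c * u := by
          have : 0 < u := lt_of_lt_of_le hT0 huT
          positivity
        calc g u ≤ Real.exp (-(c * u) / ℓ (Winv u)) := hgd
          _ ≤ Real.exp (-c / K * u) := by
              apply Real.exp_le_exp.mpr
              have h2 : c * u / K ≤ c * u / ℓ (Winv u) := by
                apply div_le_div_of_nonneg_left hcu hLu hLuK
              have h3 : -c / K * u = -(c * u / K) := by ring
              rw [h3, neg_div]
              linarith
    have h2 : ∫ u in (B*K)..x, Real.exp (-c / K * u) =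
        -(K / c) * Real.exp (-c / K * x) - (-(K / c) * Real.exp (-c / K * (B * K))) := by
      apply intervalIntegral.integral_eq_sub_of_hasDerivAt
      · intro u hu
        have hd1 : HasDerivAt (fun u : ℝ => -c / K * u) (-c / K) u := by
          simpa using (hasDerivAt_id u).const_mul (-c / K)
        have hd2 := (Real.hasDerivAt_exp (-c / K * u)).comp u hd1
        have hd3 := hd2.const_mul (-(K / c))
        have e : -(K / c) * (Real.exp (-c / K * u) * (-c / K)) = Real.exp (-c / K * u) := by
          field_simp
        rw [e] at hd3
        exact hd3
      · apply Continuous.intervalIntegrable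
        exact Real.continuous_exp.comp (continuous_const.mul continuous_id)
    have h3 : -c / K * (B * K) = -(c * B) := by field_simp
    have hexpx : 0 < Real.exp (-c / K * x) := Real.exp_pos _
    have h4 : ∫ u in (B*K)..x, Real.exp (-c / K * u) ≤ K / c * Real.exp (-(c * B)) := by
      rw [h2, h3]
      have hKc : 0 < K / c := by positivity
      have := mul_pos hKc hexpx
      linarith
    have h5 : K / c * Real.exp (-(c * B)) ≤ ε / 6 * K := by
      have h6 : Real.exp (-(c * B)) / c ≤ ε / 6 := hB.le
      calc K / c * Real.exp (-(c * B)) = (Real.exp (-(c * B)) / c) * K := by ring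
        _ ≤ ε / 6 * K := mul_le_mul_of_nonneg_right h6 hK0.le
    linarith
  -- conclude
  have hJnn : 0 ≤ ∫ u in (0:ℝ)..x, g u :=
    intervalIntegral.integral_nonneg hx0 (fun u hu => (hg01 u hu.1).1)
  have hJle : ∫ u in (0:ℝ)..x, g u ≤ ε / 2 * K := by
    rw [hsplit]; linarith
  rw [Real.norm_eq_abs, abs_of_nonneg (div_nonneg hJnn hK0.le)]
  rw [div_lt_iff₀ hK0]
  have hfin : ε / 2 * K < ε * K := mul_lt_mul_of_pos_right (by linarith) hK0
  linarith
end

section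
/- For 0 < η < 1, the function Φ_{η,2}(x) := W^{-1}(η·W(x/η)) satisfies Φ_{η,2}(x) = o(x) as x → ∞. -/
open Filter MeasureTheory

/-- For `0 < η < 1`, `Φ_{η,2}(x) = W⁻¹(η·W(x/η))` satisfies `Φ_{η,2}(x) = o(x)`
as `x → ∞`. -/
theorem Phi_eta_two_littleO_id
(w ℓ W : ℝ → ℝ)
    (hw_cont : ContinuousOn w (Set.Ici 0))
    (hw_pos : ∀ x, 0 ≤ x → 0 < w x)
    (hw_mono : MonotoneOn w (Set.Ici 0))
    (hwl : ∀ x, 0 < x → w x = x / ℓ x)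
    (hl_slow : ∀ c, 0 < c → Tendsto (fun x => ℓ (c * x) / ℓ x) atTop (nhds 1))
    (hl_inf : Tendsto ℓ atTop atTop)
    (hW : ∀ x, W x = ∫ u in (0:ℝ)..x, 1 / w u)
    (Winv : ℝ → ℝ)
    (hWinv_left : ∀ x, 0 ≤ x → Winv (W x) = x)
    (hWinv_right : ∀ x, 0 ≤ x → W (Winv x) = x)
    (η : ℝ) (hη : 0 < η) (hη1 : η < 1) :
    Tendsto (fun x => Winv (η * W (x / η)) / x) atTop (nhds 0) := by
  have hf_cont : ContinuousOn (fun u => 1 / w u) (Set.Ici 0) :=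
    continuousOn_const.div hw_cont (fun x hx => (hw_pos x hx).ne')
  have hint : ∀ a b : ℝ, 0 ≤ a → a ≤ b → IntervalIntegrable (fun u => 1 / w u) volume a b := by
    intro a b ha hab
    exact (hf_cont.mono (fun u hu => Set.mem_Ici.mpr (le_trans ha hu.1))).intervalIntegrable_of_Icc hab
  have hWdiff : ∀ a b : ℝ, 0 ≤ a → a ≤ b → W b = W a + ∫ u in a..b, 1 / w u := by
    intro a b ha hab
    rw [hW b, hW a]
    exact (intervalIntegral.integral_add_adjacent_intervals (hint 0 a le_rfl ha)
      (hint a b ha hab)).symm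
  have hW0 : W 0 = 0 := by rw [hW]; exact intervalIntegral.integral_same
  have hlow : ∀ a b : ℝ, 0 ≤ a → a ≤ b → W a + (b - a) / w b ≤ W b := by
    intro a b ha hab
    have hb : (0:ℝ) ≤ b := le_trans ha hab
    rw [hWdiff a b ha hab]
    have h1 : ∫ _u in a..b, (1 / w b) ≤ ∫ u in a..b, 1 / w u := by
      apply intervalIntegral.integral_mono_on hab intervalIntegrable_const (hint a b ha hab)
      intro u hu
      exact one_div_le_one_div_of_le (hw_pos u (le_trans ha hu.1))
        (hw_mono (Set.mem_Ici.mpr (le_trans ha hu.1)) (Set.mem_Ici.mpr hb) hu.2)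
    rw [intervalIntegral.integral_const, smul_eq_mul, mul_one_div] at h1
    linarith
  have hup : ∀ a b : ℝ, 0 < a → a ≤ b → W b ≤ W a + (b - a) / w a := by
    intro a b ha hab
    rw [hWdiff a b ha.le hab]
    have h1 : ∫ u in a..b, 1 / w u ≤ ∫ _u in a..b, (1 / w a) := by
      apply intervalIntegral.integral_mono_on hab (hint a b ha.le hab) intervalIntegrable_const
      intro u hu
      exact one_div_le_one_div_of_le (hw_pos a ha.le)
        (hw_mono (Set.mem_Ici.mpr ha.le) (Set.mem_Ici.mpr (le_trans ha.le hu.1)) hu.1)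
    rw [intervalIntegral.integral_const, smul_eq_mul, mul_one_div] at h1
    linarith
  have hlpos : ∀ z : ℝ, 0 < z → 0 < ℓ z := by
    intro z hz
    have hwz := hw_pos z hz.le
    rcases lt_trichotomy (ℓ z) 0 with h | h | h
    · exfalso
      rw [hwl z hz] at hwz
      exact absurd hwz (not_lt.mpr (le_of_lt (div_neg_of_pos_of_neg hz h)))
    · exfalso; rw [hwl z hz, h, div_zero] at hwz; exact lt_irrefl 0 hwz
    · exact h
  have hzw : ∀ z : ℝ, 0 < z → z / w z = ℓ z := by
    intro z hz
    have h1 := (hlpos z hz).ne'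
    rw [hwl z hz]
    field_simp
  have hWl : ∀ z : ℝ, 0 < z → ℓ z ≤ W z := by
    intro z hz
    have h := hlow 0 z le_rfl hz.le
    rw [hW0, sub_zero, zero_add, hzw z hz] at h
    exact h
  have hWnonneg : ∀ z : ℝ, 0 ≤ z → 0 ≤ W z := by
    intro z hz
    have h := hlow 0 z le_rfl hz
    rw [hW0, zero_add] at h
    have h2 : 0 ≤ (z - 0) / w z := div_nonneg (by linarith) (hw_pos z hz).le
    linarith
  have hhalf : ∀ z : ℝ, 0 < z → W (z/2) + ℓ z / 2 ≤ W z := by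
    intro z hz
    have h := hlow (z/2) z (by linarith) (by linarith)
    have e : (z - z/2) / w z = (z / w z) / 2 := by ring
    rw [e, hzw z hz] at h
    exact h
  have hlpos' : ∀ᶠ z in atTop, (0:ℝ) < ℓ z :=
    (eventually_gt_atTop 0).mono (fun z hz => hlpos z hz)
  -- growth lemma : W z ≥ K ℓ z eventually
  have hgrow : ∀ K : ℝ, 1 ≤ K → ∀ᶠ z in atTop, K * ℓ z ≤ W z := by
    intro K hK
    have hKpos : (0:ℝ) < K := lt_of_lt_of_le one_pos hK
    set θ : ℝ := 1 - 1/(4*K) with hθdef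
    have hθ1 : θ < 1 := by
      have : 0 < 1/(4*K) := by positivity
      simp only [hθdef]; linarith
    have hθev : ∀ᶠ z in atTop, θ * ℓ z ≤ ℓ (z/2) := by
      have h3 := (hl_slow (1/2) (by norm_num)).eventually (eventually_ge_nhds hθ1)
      filter_upwards [h3, hlpos'] with z h1 h2'
      have h4 : θ * ℓ z ≤ ℓ ((1/2)*z) := (le_div_iff₀ h2').mp h1
      have e : (1/2:ℝ)*z = z/2 := by ring
      rwa [e] at h4
    have step : ∀ A : ℝ, 0 ≤ A → (∀ᶠ z in atTop, A * ℓ z ≤ W z) →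
        ∀ᶠ z in atTop, (θ * A + 1/2) * ℓ z ≤ W z := by
      intro A hA hS
      have htrans : ∀ᶠ z in atTop, A * ℓ (z/2) ≤ W (z/2) :=
        (tendsto_id.atTop_div_const (by norm_num : (0:ℝ) < 2)).eventually hS
      filter_upwards [htrans, hθev, eventually_gt_atTop 0] with z h1 h2 h3
      have h5 := hhalf z h3
      have h6 : A * (θ * ℓ z) ≤ A * ℓ (z/2) := mul_le_mul_of_nonneg_left h2 hA
      have e : (θ * A + 1/2) * ℓ z = A * (θ * ℓ z) + ℓ z / 2 := by ring
      linarith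
    have main : ∀ n : ℕ, ∀ᶠ z in atTop, min K (1 + (n:ℝ)/4) * ℓ z ≤ W z := by
      intro n
      induction n with
      | zero =>
        simp only [Nat.cast_zero, zero_div, add_zero, min_eq_right hK]
        filter_upwards [eventually_gt_atTop 0] with z hz
        rw [one_mul]; exact hWl z hz
      | succ n ih =>
        have hA1 : (1:ℝ) ≤ min K (1 + (n:ℝ)/4) := le_min hK (by linarith [show (0:ℝ) ≤ (n:ℝ)/4 by positivity])
        have h := step _ (by linarith) ih
        filter_upwards [h, hlpos'] with z h1 h2
        refine le_trans (mul_le_mul_of_nonneg_right ?_ h2.le) h1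
        set A := min K (1 + (n:ℝ)/4) with hAdef
        have hAK : A ≤ K := min_le_left _ _
        have hstep : A + 1/4 ≤ θ * A + 1/2 := by
          have hd : A / (4*K) ≤ 1/4 := by
            rw [div_le_iff₀ (by positivity)]
            linarith
          have e : θ * A = A - A/(4*K) := by simp only [hθdef]; ring
          linarith
        have hcase : min K (1 + ((n:ℝ)+1)/4) ≤ A + 1/4 := by
          rcases le_total K (1 + (n:ℝ)/4) with hc | hc
          · have hA : A = K := min_eq_left hc
            rw [hA]; exact le_trans (min_le_left _ _) (by linarith)
          · have hA : A = 1 + (n:ℝ)/4 := min_eq_right hc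
            rw [hA]; exact le_trans (min_le_right _ _) (by linarith)
        push_cast
        linarith
    obtain ⟨n, hn⟩ := exists_nat_ge (4*K)
    have h := main n
    have hmin : min K (1 + (n:ℝ)/4) = K := min_eq_left (by linarith)
    rwa [hmin] at h
  -- continuity of W on [0,b]
  have hWcont : ∀ b : ℝ, 0 ≤ b → ContinuousOn W (Set.Icc 0 b) := by
    intro b hb
    have h1 : IntegrableOn (fun u => 1 / w u) (Set.uIcc 0 b) volume := by
      rw [Set.uIcc_of_le hb]
      exact (hf_cont.mono (fun u hu => Set.mem_Ici.mpr hu.1)).integrableOn_Icc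
    have h2 := intervalIntegral.continuousOn_primitive_interval h1
    rw [Set.uIcc_of_le hb] at h2
    exact h2.congr (fun x _ => hW x)
  -- main argument
  rw [NormedAddCommGroup.tendsto_nhds_zero]
  intro δ hδ
  set ε : ℝ := min (η * δ / 2) (1/2) with hεdef
  have hεpos : 0 < ε := lt_min (by positivity) (by norm_num)
  have hε1 : ε < 1 := lt_of_le_of_lt (min_le_right _ _) (by norm_num)
  set C : ℝ := η * (1 - ε) / ((1 - η) * ε) with hCdef
  have hCpos : 0 < C :=
    div_pos (mul_pos hη (by linarith)) (mul_pos (by linarith) hεpos)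
  set K : ℝ := max 1 C with hKdef
  have hK1 : (1:ℝ) ≤ K := le_max_left _ _
  have hCK : C ≤ K := le_max_right _ _
  have hty : Tendsto (fun x : ℝ => x / η) atTop atTop := tendsto_id.atTop_div_const hη
  have htz : Tendsto (fun x : ℝ => ε * (x / η)) atTop atTop := hty.const_mul_atTop hεpos
  have hKz := htz.eventually (hgrow K hK1)
  filter_upwards [hKz, eventually_gt_atTop 0] with x hKx hx
  set y : ℝ := x / η with hydef
  set z : ℝ := ε * y with hzdef
  have hy0 : 0 < y := div_pos hx hη
  have hz0 : 0 < z := mul_pos hεpos hy0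
  have hzy : z ≤ y := by nlinarith
  have h1 := hup z y hz0 hzy
  have hlz0 : 0 < ℓ z := hlpos z hz0
  have h2 : (y - z) / w z = (1 - ε)/ε * ℓ z := by
    rw [hwl z hz0, div_div_eq_mul_div, hzdef]
    field_simp
  rw [h2] at h1
  have h4 : η * W y ≤ W z := by
    have e2 : C * ℓ z ≤ W z := le_trans (mul_le_mul_of_nonneg_right hCK hlz0.le) hKx
    have h5 := mul_le_mul_of_nonneg_left h1 hη.le
    rw [mul_add] at h5
    have hη' : (1:ℝ) - η ≠ 0 := ne_of_gt (by linarith)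
    have e3 : (1-η) * (C * ℓ z) = η * ((1-ε)/ε * ℓ z) := by
      rw [hCdef]; field_simp
    have h6 : (1-η) * (C * ℓ z) ≤ (1-η) * W z :=
      mul_le_mul_of_nonneg_left e2 (by linarith)
    have e4 : η * W z + (1-η) * W z = W z := by ring
    linarith
  have hmem : η * W y ∈ Set.Icc (W 0) (W z) := by
    rw [hW0]
    exact ⟨mul_nonneg hη.le (hWnonneg y hy0.le), h4⟩
  obtain ⟨t, ht, hWt⟩ := intermediate_value_Icc hz0.le (hWcont z hz0.le) hmem
  have hWinvt : Winv (η * W y) = t := by rw [← hWt, hWinv_left t ht.1]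
  have hb : Winv (η * W y) ≤ z := by rw [hWinvt]; exact ht.2
  have hnn : 0 ≤ Winv (η * W y) := by rw [hWinvt]; exact ht.1
  rw [Real.norm_eq_abs, abs_of_nonneg (div_nonneg hnn hx.le)]
  have hle : Winv (η * W y) / x ≤ z / x := by gcongr
  have hzx : z / x = ε / η := by
    rw [hzdef, hydef]
    field_simp
  have hfin : ε / η < δ := by
    rw [div_lt_iff₀ hη]
    have hm := min_le_left (η * δ / 2) (1/2:ℝ)
    nlinarith
  calc Winv (η * W y) / x ≤ z / x := hle
    _ = ε / η := hzx
    _ < δ := hfin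
end

section
/- For 0 < η < η' < 1 and any λ > 0, Φ_{η,2}(λx) = o(Φ_{η',2}(x)) as x → ∞, where Φ_{η,2}(x) := W^{-1}(η·W(x/η)). -/
open Filter MeasureTheory

set_option maxHeartbeats 1600000 in
/-- For `0 < η < η' < 1` and `λ > 0`, `Φ_{η,2}(λx) = o(Φ_{η',2}(x))` as `x → ∞`,
where `Φ_{η,2}(x) = W⁻¹(η·W(x/η))`. -/
theorem Phi_eta_two_comparison
(w ℓ W : ℝ → ℝ)
    (hw_cont : ContinuousOn w (Set.Ici 0))
    (hw_pos : ∀ x, 0 ≤ x → 0 < w x)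
    (hw_mono : MonotoneOn w (Set.Ici 0))
    (hwl : ∀ x, 0 < x → w x = x / ℓ x)
    (hl_slow : ∀ c, 0 < c → Tendsto (fun x => ℓ (c * x) / ℓ x) atTop (nhds 1))
    (hl_inf : Tendsto ℓ atTop atTop)
    (hW : ∀ x, W x = ∫ u in (0:ℝ)..x, 1 / w u)
    (Winv : ℝ → ℝ)
    (hWinv_left : ∀ x, 0 ≤ x → Winv (W x) = x)
    (hWinv_right : ∀ x, 0 ≤ x → W (Winv x) = x)
    (η η' lam : ℝ) (hη : 0 < η) (hηη' : η < η') (hη'1 : η' < 1) (hlam : 0 < lam) :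
    Tendsto (fun x => Winv (η * W (lam * x / η)) / Winv (η' * W (x / η')))
      atTop (nhds 0) := by
  -- ### Part 1: basic integral estimates on `W`
  have hfpos : ∀ u : ℝ, 0 ≤ u → 0 < 1 / w u := fun u hu => one_div_pos.mpr (hw_pos u hu)
  have hfanti : ∀ a b : ℝ, 0 ≤ a → a ≤ b → 1 / w b ≤ 1 / w a := by
    intro a b ha hab
    exact one_div_le_one_div_of_le (hw_pos a ha) (hw_mono ha (le_trans ha hab) hab)
  have hint : ∀ a b : ℝ, 0 ≤ a → a ≤ b →
      IntervalIntegrable (fun u => 1 / w u) volume a b := by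
    intro a b ha hab
    apply ContinuousOn.intervalIntegrable
    apply ContinuousOn.div continuousOn_const
    · apply hw_cont.mono
      rw [Set.uIcc_of_le hab]
      exact fun x hx => le_trans ha hx.1
    · rw [Set.uIcc_of_le hab]
      exact fun x hx => ne_of_gt (hw_pos x (le_trans ha hx.1))
  have hWsub : ∀ a b : ℝ, 0 ≤ a → a ≤ b → W b - W a = ∫ u in a..b, 1 / w u := by
    intro a b ha hab
    rw [hW, hW, ← intervalIntegral.integral_add_adjacent_intervals (hint 0 a le_rfl ha)
      (hint a b ha hab)]
    ring
  have hlower : ∀ a b : ℝ, 0 ≤ a → a ≤ b → (b - a) * (1 / w b) ≤ W b - W a := by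
    intro a b ha hab
    rw [hWsub a b ha hab]
    calc (b - a) * (1 / w b) = ∫ _ in a..b, 1 / w b := by
          rw [intervalIntegral.integral_const, smul_eq_mul]
      _ ≤ ∫ u in a..b, 1 / w u := by
          apply intervalIntegral.integral_mono_on hab (intervalIntegrable_const) (hint a b ha hab)
          intro x hx
          exact hfanti x b (le_trans ha hx.1) hx.2
  have hupper : ∀ a b : ℝ, 0 ≤ a → a ≤ b → W b - W a ≤ (b - a) * (1 / w a) := by
    intro a b ha hab
    rw [hWsub a b ha hab]
    calc (∫ u in a..b, 1 / w u) ≤ ∫ _ in a..b, 1 / w a := by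
          apply intervalIntegral.integral_mono_on hab (hint a b ha hab) (intervalIntegrable_const)
          intro x hx
          exact hfanti a x ha hx.1
      _ = (b - a) * (1 / w a) := by rw [intervalIntegral.integral_const, smul_eq_mul]
  have hW0 : W 0 = 0 := by rw [hW]; simp
  have hWsm : StrictMonoOn W (Set.Ici 0) := by
    intro a ha b hb hab
    have := hlower a b ha hab.le
    nlinarith [hfpos b hb, hab]
  have hWnonneg : ∀ x : ℝ, 0 ≤ x → 0 ≤ W x := by
    intro x hx
    have := hlower 0 x le_rfl hx
    nlinarith [hfpos x hx, hfpos 0 le_rfl]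
  have hWpos : ∀ x : ℝ, 0 < x → 0 < W x := by
    intro x hx
    have := hWsm (Set.self_mem_Ici) (le_of_lt hx : (0:ℝ) ≤ x) hx
    rwa [hW0] at this
  have hlpos : ∀ x : ℝ, 0 < x → 0 < ℓ x := by
    intro x hx
    have hw := hwl x hx
    have hwp := hw_pos x hx.le
    rcases lt_trichotomy (ℓ x) 0 with h | h | h
    · exfalso; nlinarith [div_neg_of_pos_of_neg hx h]
    · exfalso; rw [h, div_zero] at hw; linarith
    · exact h
  -- ### Part 2: `W x / ℓ x → ∞`
  have hstep : ∀ (x : ℝ), 0 < x → ∀ j : ℕ,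
      ℓ (x / 2^j) / 2 ≤ W (x / 2^j) - W (x / 2^(j+1)) := by
    intro x hx j
    set b : ℝ := x / 2^j with hb
    have hbpos : 0 < b := by positivity
    have h1 : x / 2^(j+1) = b / 2 := by rw [hb]; ring
    rw [h1]
    have h2 := hlower (b/2) b (by positivity) (by linarith)
    have h3 : 1 / w b = ℓ b / b := by rw [hwl b hbpos, one_div_div]
    rw [h3] at h2
    have h4 : (b - b/2) * (ℓ b / b) = ℓ b / 2 := by field_simp; ring
    linarith [h4 ▸ h2]
  have hWdiv : Tendsto (fun x => W x / ℓ x) atTop atTop := by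
    rw [tendsto_atTop]
    intro M
    set k : ℕ := ⌈4 * max M 1⌉₊ with hk
    have hk4 : 4 * max M 1 ≤ (k : ℝ) := Nat.le_ceil _
    have hstep2 : ∀ j : Fin k, ∀ᶠ x : ℝ in atTop, ℓ x / 2 ≤ ℓ (x / 2^(j:ℕ)) := by
      intro j
      have h1 : Tendsto (fun x => ℓ ((1/2)^(j:ℕ) * x) / ℓ x) atTop (nhds 1) := by
        apply hl_slow; positivity
      have h2 : ∀ᶠ x : ℝ in atTop, (1:ℝ)/2 ≤ ℓ ((1/2)^(j:ℕ) * x) / ℓ x :=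
        h1.eventually (eventually_ge_nhds (by norm_num))
      have h3 : ∀ᶠ x : ℝ in atTop, (1:ℝ) ≤ ℓ x := hl_inf.eventually_ge_atTop 1
      filter_upwards [h2, h3] with x h2 h3
      have hlx : 0 < ℓ x := by linarith
      have : (1:ℝ)/2 * ℓ x ≤ ℓ ((1/2)^(j:ℕ) * x) / ℓ x * ℓ x := by nlinarith
      rw [div_mul_cancel₀ _ (ne_of_gt hlx)] at this
      have heq : (1/2:ℝ)^(j:ℕ) * x = x / 2^(j:ℕ) := by
        rw [div_pow, one_pow]; ring
      rw [heq] at this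
      linarith
    have hall := (Filter.eventually_all (ι := Fin k)).2 hstep2
    have h3 : ∀ᶠ x : ℝ in atTop, (1:ℝ) ≤ ℓ x := hl_inf.eventually_ge_atTop 1
    filter_upwards [hall, h3, eventually_ge_atTop (1:ℝ)] with x hall h3 hx1
    have hx : (0:ℝ) < x := by linarith
    have hlx : (0:ℝ) < ℓ x := by linarith
    rw [le_div_iff₀ hlx]
    have htel : ∑ j ∈ Finset.range k, (W (x / 2^j) - W (x / 2^(j+1))) = W x - W (x / 2^k) := by
      have := Finset.sum_range_sub' (fun j => W (x / 2^j)) k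
      simpa using this
    have hsum : (k : ℝ) * (ℓ x / 4) ≤ ∑ j ∈ Finset.range k, (W (x / 2^j) - W (x / 2^(j+1))) := by
      calc (k : ℝ) * (ℓ x / 4) = ∑ _j ∈ Finset.range k, ℓ x / 4 := by
            rw [Finset.sum_const, Finset.card_range, nsmul_eq_mul]
        _ ≤ _ := by
            apply Finset.sum_le_sum
            intro j hj
            have hj' : j < k := Finset.mem_range.mp hj
            have h1 := hall ⟨j, hj'⟩
            have h2 := hstep x hx j
            simp only at h1
            linarith
    have hWk : 0 ≤ W (x / 2^k) := hWnonneg _ (by positivity)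
    have : (k:ℝ) * (ℓ x / 4) ≤ W x := by rw [htel] at hsum; linarith
    nlinarith [le_max_left M 1, le_max_right M 1]
  -- ### Part 3: `W` is slowly varying
  have hWmono : ∀ a b : ℝ, 0 ≤ a → a ≤ b → W a ≤ W b := by
    intro a b ha hab
    rcases eq_or_lt_of_le hab with h | h
    · rw [h]
    · exact (hWsm (Set.mem_Ici.mpr ha) (Set.mem_Ici.mpr (le_trans ha hab)) h).le
  have hWslow1 : ∀ c : ℝ, 1 ≤ c → Tendsto (fun x => W (c * x) / W x) atTop (nhds 1) := by
    intro c hc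
    have hlo : Tendsto (fun _ : ℝ => (1:ℝ)) atTop (nhds 1) := tendsto_const_nhds
    have hhi : Tendsto (fun x : ℝ => 1 + (c - 1) * (ℓ x / W x)) atTop (nhds 1) := by
      have h1 : Tendsto (fun x => ℓ x / W x) atTop (nhds 0) := by
        have h0 := hWdiv.inv_tendsto_atTop
        apply h0.congr'
        filter_upwards [eventually_gt_atTop (0:ℝ)] with x hx
        simp only [Pi.inv_apply, inv_div]
      have := (h1.const_mul (c - 1)).const_add 1
      simpa using this
    apply tendsto_of_tendsto_of_tendsto_of_le_of_le' hlo hhi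
    · filter_upwards [eventually_gt_atTop (0:ℝ)] with x hx
      exact (one_le_div (hWpos x hx)).mpr (hWmono x (c*x) hx.le (by nlinarith))
    · filter_upwards [eventually_gt_atTop (0:ℝ)] with x hx
      have h2 := hupper x (c*x) hx.le (by nlinarith)
      have hfx : 1 / w x = ℓ x / x := by rw [hwl x hx, one_div_div]
      rw [hfx] at h2
      have h3 : (c*x - x) * (ℓ x / x) = (c - 1) * ℓ x := by field_simp
      rw [h3] at h2
      rw [div_le_iff₀ (hWpos x hx)]
      have hWx := hWpos x hx
      have : (1 + (c-1) * (ℓ x / W x)) * W x = W x + (c-1) * ℓ x := by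
        field_simp
      rw [this]; linarith
  have hWslow : ∀ c : ℝ, 0 < c → Tendsto (fun x => W (c * x) / W x) atTop (nhds 1) := by
    intro c hc
    rcases le_or_gt 1 c with h | h
    · exact hWslow1 c h
    · have hd : 1 ≤ c⁻¹ := (one_le_inv_iff₀.mpr ⟨hc, h.le⟩ : _)
      have h1 := hWslow1 c⁻¹ hd
      have h2 : Tendsto (fun x => W x / W (c⁻¹ * x)) atTop (nhds 1) := by
        have := h1.inv₀ one_ne_zero
        simp only [inv_one] at this
        apply this.congr
        intro x
        rw [inv_div]
      have h3 : Tendsto (fun x : ℝ => c * x) atTop atTop :=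
        Tendsto.const_mul_atTop hc tendsto_id
      have h4 := h2.comp h3
      apply h4.congr
      intro x
      simp only [Function.comp_apply]
      rw [inv_mul_cancel_left₀ (ne_of_gt hc)]
  -- ### Part 4: `W → ∞`, continuity, and properties of `Winv`
  have hWtop : Tendsto W atTop atTop := by
    apply tendsto_atTop_mono' atTop (by
      filter_upwards [eventually_gt_atTop (0:ℝ)] with x hx
      have h2 := hlower (x/2) x (by positivity) (by linarith)
      have h3 : 1 / w x = ℓ x / x := by rw [hwl x hx, one_div_div]
      rw [h3] at h2
      have h4 : (x - x/2) * (ℓ x / x) = ℓ x / 2 := by field_simp; ring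
      have h5 := hWnonneg (x/2) (by positivity)
      show ℓ x / 2 ≤ W x
      linarith [h4 ▸ h2])
      (hl_inf.atTop_div_const two_pos)
  have hWcont : ContinuousOn W (Set.Ici 0) := by
    apply LipschitzOnWith.continuousOn (K := Real.toNNReal (1 / w 0))
    apply LipschitzOnWith.of_dist_le_mul
    intro x hx y hy
    rw [Real.dist_eq, Real.dist_eq,
      Real.coe_toNNReal _ (le_of_lt (one_div_pos.mpr (hw_pos 0 le_rfl)))]
    rcases le_total y x with h | h
    · rw [abs_of_nonneg (by linarith [hlower y x hy h, mul_nonneg (by linarith : (0:ℝ) ≤ x - y) (le_of_lt (one_div_pos.mpr (hw_pos x (le_trans hy h))))]), abs_of_nonneg (by linarith)]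
      have h1 := hupper y x hy h
      have h2 := hfanti 0 y le_rfl hy
      nlinarith
    · rw [abs_of_nonpos (by linarith [hlower x y hx h, mul_nonneg (by linarith : (0:ℝ) ≤ y - x) (le_of_lt (one_div_pos.mpr (hw_pos y (le_trans hx h))))]), abs_of_nonpos (by linarith)]
      have h1 := hupper x y hx h
      have h2 := hfanti 0 x le_rfl hx
      nlinarith
  have hWinv_nonneg : ∀ t : ℝ, 0 ≤ t → 0 ≤ Winv t := by
    intro t ht
    obtain ⟨x₀, hx₀t, hx₀0⟩ :=
      ((hWtop.eventually_ge_atTop t).and (eventually_ge_atTop (0:ℝ))).exists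
    have hsub : Set.Icc (W 0) (W x₀) ⊆ W '' Set.Icc 0 x₀ :=
      intermediate_value_Icc hx₀0 (hWcont.mono (fun y hy => hy.1))
    have htmem : t ∈ Set.Icc (W 0) (W x₀) := by rw [hW0]; exact ⟨ht, hx₀t⟩
    obtain ⟨X, hX, hWX⟩ := hsub htmem
    rw [← hWX, hWinv_left X hX.1]
    exact hX.1
  have hWinv_top : Tendsto Winv atTop atTop := by
    rw [tendsto_atTop]
    intro N
    filter_upwards [eventually_ge_atTop (W (max N 0)), eventually_ge_atTop (0:ℝ)] with t h1 h2
    have hA : 0 ≤ Winv t := hWinv_nonneg t h2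
    by_contra hcon
    push_neg at hcon
    have hlt : Winv t < max N 0 := lt_of_lt_of_le hcon (le_max_left N 0)
    have := hWsm (Set.mem_Ici.mpr hA) (Set.mem_Ici.mpr (le_max_right N 0)) hlt
    rw [hWinv_right t h2] at this
    linarith
  -- ### Part 5: conclusion
  have hη' : 0 < η' := lt_trans hη hηη'
  rw [NormedAddCommGroup.tendsto_nhds_zero]
  intro ε hε
  set δ : ℝ := ε / 2 with hδdef
  have hδ : 0 < δ := by positivity
  set c₀ : ℝ := (1 + η / η') / 2 with hc₀def
  set c₁ : ℝ := (c₀ * η' / η + 1) / 2 with hc₁def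
  have hr : η / η' < 1 := (div_lt_one hη').mpr hηη'
  have hrpos : 0 < η / η' := div_pos hη hη'
  have hc₀1 : c₀ < 1 := by rw [hc₀def]; linarith
  have hc₀r : η / η' < c₀ := by rw [hc₀def]; linarith
  have hc₀pos : 0 < c₀ := by linarith
  have hpre : 1 < c₀ * η' / η := by
    rw [lt_div_iff₀ hη]
    have := (div_lt_iff₀ hη').mp hc₀r
    linarith
  have hc₁1 : 1 < c₁ := by rw [hc₁def]; linarith
  have hc₁lt : η * c₁ < c₀ * η' := by
    have h2 : c₁ < c₀ * η' / η := by rw [hc₁def]; linarith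
    calc η * c₁ < η * (c₀ * η' / η) := by nlinarith
      _ = c₀ * η' := by field_simp
  set B : ℝ → ℝ := fun x => Winv (η' * W (x / η')) with hBdef
  have hxd : Tendsto (fun x : ℝ => x / η') atTop atTop :=
    tendsto_id.atTop_div_const hη'
  have hBtop : Tendsto (fun x => η' * W (x / η')) atTop atTop :=
    (hWtop.comp hxd).const_mul_atTop hη'
  have hB : Tendsto B atTop atTop := hWinv_top.comp hBtop
  have hratio2 : Tendsto (fun x => W (δ * B x) / W (B x)) atTop (nhds 1) :=
    (hWslow δ hδ).comp hB
  have hE2 : ∀ᶠ x : ℝ in atTop, c₀ * (η' * W (x / η')) ≤ W (δ * B x) := by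
    filter_upwards [hratio2.eventually (eventually_ge_nhds hc₀1),
      eventually_gt_atTop (0:ℝ)] with x h1 hx
    have hWx : 0 < W (x / η') := hWpos _ (by positivity)
    have harg : 0 ≤ η' * W (x / η') := by positivity
    have hWB : W (B x) = η' * W (x / η') := hWinv_right _ harg
    have hWBpos : 0 < W (B x) := by rw [hWB]; positivity
    have := (le_div_iff₀ hWBpos).mp h1
    rw [hWB] at this
    linarith
  have hratio1 : Tendsto (fun x => W (lam * η' / η * (x / η')) / W (x / η')) atTop (nhds 1) :=
    (hWslow (lam * η' / η) (by positivity)).comp hxd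
  have hE1 : ∀ᶠ x : ℝ in atTop, η * W (lam * x / η) ≤ c₀ * η' * W (x / η') := by
    filter_upwards [hratio1.eventually (eventually_le_nhds hc₁1),
      eventually_gt_atTop (0:ℝ)] with x h1 hx
    have heq : lam * η' / η * (x / η') = lam * x / η := by field_simp
    rw [heq] at h1
    have hWx : 0 < W (x / η') := hWpos _ (by positivity)
    have h2 : W (lam * x / η) ≤ c₁ * W (x / η') := (div_le_iff₀ hWx).mp h1
    have h3 : η * W (lam * x / η) ≤ η * (c₁ * W (x / η')) :=
      mul_le_mul_of_nonneg_left h2 hη.le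
    have h4 : η * (c₁ * W (x / η')) = η * c₁ * W (x / η') := by ring
    have h5 : η * c₁ * W (x / η') ≤ c₀ * η' * W (x / η') :=
      mul_le_mul_of_nonneg_right hc₁lt.le hWx.le
    linarith
  filter_upwards [hE1, hE2, eventually_gt_atTop (0:ℝ)] with x h1 h2 hx
  have hWx : 0 < W (x / η') := hWpos _ (by positivity)
  have ht' : 0 < η' * W (x / η') := by positivity
  have htnn : 0 ≤ η * W (lam * x / η) := by
    have := hWnonneg (lam * x / η) (by positivity)
    positivity
  set A : ℝ := Winv (η * W (lam * x / η)) with hAdef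
  have hAnn : 0 ≤ A := hWinv_nonneg _ htnn
  have hBnn : 0 ≤ B x := hWinv_nonneg _ ht'.le
  have hBposx : 0 < B x := by
    rcases eq_or_lt_of_le hBnn with h | h
    · exfalso
      have := hWinv_right _ ht'.le
      rw [show B x = Winv (η' * W (x / η')) from rfl] at h
      rw [← h, hW0] at this
      linarith
    · exact h
  have hWA : W A = η * W (lam * x / η) := hWinv_right _ htnn
  have hkey : W A ≤ W (δ * B x) := by rw [hWA]; linarith
  have hAB : A ≤ δ * B x := by
    by_contra hcon
    push_neg at hcon
    have := hWsm (Set.mem_Ici.mpr (by positivity)) (Set.mem_Ici.mpr hAnn) hcon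
    linarith
  have habs : |A / B x| < ε := by
    rw [abs_of_nonneg (div_nonneg hAnn hBnn)]
    have : A / B x ≤ δ := by
      rw [div_le_iff₀ hBposx]; linarith [hAB]
    rw [hδdef] at this; linarith
  calc ‖A / B x‖ = |A / B x| := rfl
    _ < ε := habs
end

section
/- The operator H defined on homeomorphisms f of [0,∞) by H(f)(x) := W^{-1}(∫₀ˣ du / w(f^{-1}(u))) is monotone: (i) if f ≤ g pointwise then H(f) ≤ H(g) pointwise; (ii) if f(x) ≤ g(x) for all sufficiently large x and H(f) is unbounded, then limsup_{x→∞} H(f)(x)/H(g)(x) ≤ 1. -/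
open Filter MeasureTheory

/-- Surjectivity of a continuous strictly increasing unbounded function on `[0,∞)`
with `f 0 = 0` onto `[0,∞)`. -/
private lemma Hop_surj_aux (f : ℝ → ℝ) (hf0 : f 0 = 0)
    (hf_inf : Filter.Tendsto f Filter.atTop Filter.atTop)
    (hf_cont : ContinuousOn f (Set.Ici 0)) :
    ∀ u, 0 ≤ u → ∃ x, 0 ≤ x ∧ f x = u := by
  intro u hu
  obtain ⟨b, hb1, hb2⟩ : ∃ b, 0 ≤ b ∧ u ≤ f b := by
    obtain ⟨b, hb⟩ := ((hf_inf.eventually_ge_atTop u).and (Filter.eventually_ge_atTop 0)).exists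
    exact ⟨b, hb.2, hb.1⟩
  have hsub : Set.Icc (0:ℝ) b ⊆ Set.Ici 0 := fun x hx => hx.1
  have h := intermediate_value_Icc hb1 (hf_cont.mono hsub)
  obtain ⟨x, hx, hfx⟩ := h ⟨by rw [hf0]; exact hu, hb2⟩
  exact ⟨x, hx.1, hfx⟩

/-- The inverse of such an `f` is nonnegative and monotone on `[0,∞)`. -/
private lemma Hop_inv_aux (f finv : ℝ → ℝ)
    (hf_mono : StrictMonoOn f (Set.Ici 0)) (hf0 : f 0 = 0)
    (hf_inf : Filter.Tendsto f Filter.atTop Filter.atTop)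
    (hf_cont : ContinuousOn f (Set.Ici 0))
    (hfinv_left : ∀ x, 0 ≤ x → finv (f x) = x) :
    (∀ u, 0 ≤ u → 0 ≤ finv u) ∧ MonotoneOn finv (Set.Ici 0) := by
  have hsurj := Hop_surj_aux f hf0 hf_inf hf_cont
  constructor
  · intro u hu
    obtain ⟨x, hx, rfl⟩ := hsurj u hu
    rw [hfinv_left x hx]; exact hx
  · intro u hu v hv huv
    obtain ⟨x, hx, rfl⟩ := hsurj u hu
    obtain ⟨y, hy, rfl⟩ := hsurj v hv
    rw [hfinv_left x hx, hfinv_left y hy]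
    exact (hf_mono.le_iff_le hx hy).mp huv

/-- Monotonicity of the operator `H(f)(x) = W⁻¹(∫₀ˣ du / w(f⁻¹(u)))` acting on
increasing homeomorphisms `f` of `[0,∞)`:
(i) if `f ≤ g` on `[0,∞)` then `H(f) ≤ H(g)` on `[0,∞)`;
(ii) if `f(x) ≤ g(x)` for all large `x` and `H(f)` is unbounded, then
`limsup H(f)(x)/H(g)(x) ≤ 1`. -/
theorem Hop_monotone
(w ℓ W : ℝ → ℝ)
    (hw_cont : ContinuousOn w (Set.Ici 0))
    (hw_pos : ∀ x, 0 ≤ x → 0 < w x)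
    (hw_mono : MonotoneOn w (Set.Ici 0))
    (hwl : ∀ x, 0 < x → w x = x / ℓ x)
    (hl_slow : ∀ c, 0 < c → Tendsto (fun x => ℓ (c * x) / ℓ x) atTop (nhds 1))
    (hl_inf : Tendsto ℓ atTop atTop)
    (hW : ∀ x, W x = ∫ u in (0:ℝ)..x, 1 / w u)
    (Winv : ℝ → ℝ)
    (hWinv_left : ∀ x, 0 ≤ x → Winv (W x) = x)
    (hWinv_right : ∀ x, 0 ≤ x → W (Winv x) = x)
    (f g finv ginv : ℝ → ℝ)
    (hf_mono : StrictMonoOn f (Set.Ici 0)) (hg_mono : StrictMonoOn g (Set.Ici 0))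
    (hf0 : f 0 = 0) (hg0 : g 0 = 0)
    (hf_inf : Tendsto f atTop atTop) (hg_inf : Tendsto g atTop atTop)
    (hf_cont : ContinuousOn f (Set.Ici 0)) (hg_cont : ContinuousOn g (Set.Ici 0))
    (hfinv_left : ∀ x, 0 ≤ x → finv (f x) = x)
    (hfinv_right : ∀ x, 0 ≤ x → f (finv x) = x)
    (hginv_left : ∀ x, 0 ≤ x → ginv (g x) = x)
    (hginv_right : ∀ x, 0 ≤ x → g (ginv x) = x)
    (Hf Hg : ℝ → ℝ)
    (hHf : ∀ x, Hf x = Winv (∫ u in (0:ℝ)..x, 1 / w (finv u)))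
    (hHg : ∀ x, Hg x = Winv (∫ u in (0:ℝ)..x, 1 / w (ginv u))) :
    ((∀ x, 0 ≤ x → f x ≤ g x) → ∀ x, 0 ≤ x → Hf x ≤ Hg x) ∧
    ((∀ᶠ x in atTop, f x ≤ g x) → ¬ BddAbove (Hf '' Set.Ici 0) →
      limsup (fun x => Hf x / Hg x) atTop ≤ 1) := by
  -- notation for the two primitives
  set A : ℝ → ℝ := fun x => ∫ u in (0:ℝ)..x, 1 / w (finv u) with hA_def
  set B : ℝ → ℝ := fun x => ∫ u in (0:ℝ)..x, 1 / w (ginv u) with hB_def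
  -- basic facts about inverses
  obtain ⟨hfinv_nonneg, hfinv_mono⟩ :=
    Hop_inv_aux f finv hf_mono hf0 hf_inf hf_cont hfinv_left
  obtain ⟨hginv_nonneg, hginv_mono⟩ :=
    Hop_inv_aux g ginv hg_mono hg0 hg_inf hg_cont hginv_left
  -- the reciprocal of w is antitone and positive on [0,∞)
  have hinvw_pos : ∀ x, 0 ≤ x → 0 < 1 / w x := fun x hx =>
    one_div_pos.mpr (hw_pos x hx)
  have hinvw_anti : AntitoneOn (fun u => 1 / w u) (Set.Ici 0) := fun u hu v hv huv =>
    one_div_le_one_div_of_le (hw_pos u hu) (hw_mono hu hv huv)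
  -- integrands for A and B
  have hfI_anti : AntitoneOn (fun u => 1 / w (finv u)) (Set.Ici 0) := fun u hu v hv huv =>
    one_div_le_one_div_of_le (hw_pos _ (hfinv_nonneg u hu))
      (hw_mono (hfinv_nonneg u hu) (hfinv_nonneg v hv) (hfinv_mono hu hv huv))
  have hgI_anti : AntitoneOn (fun u => 1 / w (ginv u)) (Set.Ici 0) := fun u hu v hv huv =>
    one_div_le_one_div_of_le (hw_pos _ (hginv_nonneg u hu))
      (hw_mono (hginv_nonneg u hu) (hginv_nonneg v hv) (hginv_mono hu hv huv))
  -- interval integrability on nonnegative intervals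
  have hsub : ∀ a b : ℝ, 0 ≤ a → 0 ≤ b → Set.uIcc a b ⊆ Set.Ici 0 := by
    intro a b ha hb x hx
    exact le_trans (le_inf ha hb) hx.1
  have hwint : ∀ a b : ℝ, 0 ≤ a → 0 ≤ b →
      IntervalIntegrable (fun u => 1 / w u) volume a b := fun a b ha hb =>
    (hinvw_anti.mono (hsub a b ha hb)).intervalIntegrable
  have hfint : ∀ a b : ℝ, 0 ≤ a → 0 ≤ b →
      IntervalIntegrable (fun u => 1 / w (finv u)) volume a b := fun a b ha hb =>
    (hfI_anti.mono (hsub a b ha hb)).intervalIntegrable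
  have hgint : ∀ a b : ℝ, 0 ≤ a → 0 ≤ b →
      IntervalIntegrable (fun u => 1 / w (ginv u)) volume a b := fun a b ha hb =>
    (hgI_anti.mono (hsub a b ha hb)).intervalIntegrable
  -- generic lower bound for integrals of antitone positive integrands
  have hlow : ∀ (φ : ℝ → ℝ), AntitoneOn φ (Set.Ici 0) → ∀ a b : ℝ, 0 ≤ a → a ≤ b →
      (b - a) * φ b ≤ ∫ u in a..b, φ u := by
    intro φ hφ a b ha hab
    have hb : (0:ℝ) ≤ b := ha.trans hab
    have h1 : ∫ u in a..b, φ b = (b - a) * φ b := by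
      rw [intervalIntegral.integral_const, smul_eq_mul]
    rw [← h1]
    refine intervalIntegral.integral_mono_on hab intervalIntegrable_const
      ((hφ.mono (hsub a b ha hb)).intervalIntegrable) ?_
    intro x hx
    exact hφ (ha.trans hx.1) hb hx.2
  -- difference formula
  have hdiff : ∀ (φ : ℝ → ℝ), (∀ a b : ℝ, 0 ≤ a → 0 ≤ b →
      IntervalIntegrable φ volume a b) → ∀ a b : ℝ, 0 ≤ a → a ≤ b →
      (∫ u in (0:ℝ)..b, φ u) = (∫ u in (0:ℝ)..a, φ u) + ∫ u in a..b, φ u := by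
    intro φ hφ a b ha hab
    rw [intervalIntegral.integral_add_adjacent_intervals (hφ 0 a le_rfl ha)
      (hφ a b ha (ha.trans hab))]
  -- W is strictly monotone on [0,∞)
  have hW0 : W 0 = 0 := by rw [hW]; simp
  have hW_smono : StrictMonoOn W (Set.Ici 0) := by
    intro a ha b hb hab
    have h1 : W b = W a + ∫ u in a..b, 1 / w u := by
      rw [hW, hW, hdiff _ hwint a b ha hab.le]
    have h2 : 0 < (b - a) * (1 / w b) :=
      mul_pos (by linarith) (hinvw_pos b hb)
    have h3 := hlow _ hinvw_anti a b ha hab.le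
    linarith
  -- ℓ is positive for positive arguments and W dominates ℓ
  have hl_pos : ∀ x : ℝ, 0 < x → 0 < ℓ x := by
    intro x hx
    have hwx := hw_pos x hx.le
    rw [hwl x hx] at hwx
    rcases div_pos_iff.mp hwx with h | h
    · exact h.2
    · linarith [h.1]
  have hWl : ∀ x : ℝ, 0 < x → ℓ x ≤ W x := by
    intro x hx
    have h1 := hlow _ hinvw_anti 0 x le_rfl hx.le
    have h2 : 1 / w x = ℓ x / x := by
      rw [hwl x hx, one_div_div]
    rw [hW]
    calc ℓ x = (x - 0) * (ℓ x / x) := by field_simp; ring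
    _ ≤ _ := by rw [← h2]; exact h1
  have hW_inf : Tendsto W atTop atTop := by
    refine tendsto_atTop_mono' atTop ?_ hl_inf
    filter_upwards [eventually_gt_atTop 0] with x hx
    exact hWl x hx
  -- continuity of W on compacts, hence surjectivity onto [0,∞)
  have hW_cont : ContinuousOn W (Set.Ici 0) := by
    have hWfun : W = fun x => ∫ u in (0:ℝ)..x, 1 / w u := funext hW
    rw [hWfun]
    intro b hb
    have hmem : (0:ℝ) ∈ Set.uIcc 0 (b + 1) := Set.left_mem_uIcc
    have h := intervalIntegral.continuousOn_primitive_interval'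
      (hwint 0 (b + 1) le_rfl (by linarith [Set.mem_Ici.mp hb])) hmem
    have hb1 : Set.uIcc (0:ℝ) (b+1) = Set.Icc 0 (b+1) :=
      Set.uIcc_of_le (by linarith [Set.mem_Ici.mp hb])
    rw [hb1] at h
    have hbmem : b ∈ Set.Icc (0:ℝ) (b+1) := ⟨hb, by linarith⟩
    refine (h b hbmem).mono_of_mem_nhdsWithin ?_
    rw [mem_nhdsWithin]
    refine ⟨Set.Iio (b + 1), isOpen_Iio, by simp, fun y hy => ⟨hy.2, hy.1.le⟩⟩
  have hW_surj := Hop_surj_aux W hW0 hW_inf hW_cont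
  -- Winv is nonnegative and monotone on [0,∞)
  have hWinv_nonneg : ∀ t, 0 ≤ t → 0 ≤ Winv t := by
    intro t ht
    obtain ⟨x, hx, rfl⟩ := hW_surj t ht
    rw [hWinv_left x hx]; exact hx
  have hWinv_mono : ∀ s t, 0 ≤ s → s ≤ t → Winv s ≤ Winv t := by
    intro s t hs hst
    obtain ⟨x, hx, rfl⟩ := hW_surj s hs
    obtain ⟨y, hy, rfl⟩ := hW_surj t (hs.trans hst)
    rw [hWinv_left x hx, hWinv_left y hy]
    exact (hW_smono.le_iff_le hx hy).mp hst
  -- nonnegativity and monotonicity of A, B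
  have hA_nonneg : ∀ x, 0 ≤ x → 0 ≤ A x := by
    intro x hx
    refine intervalIntegral.integral_nonneg hx ?_
    intro u hu
    exact (hinvw_pos _ (hfinv_nonneg u hu.1)).le
  have hB_nonneg : ∀ x, 0 ≤ x → 0 ≤ B x := by
    intro x hx
    refine intervalIntegral.integral_nonneg hx ?_
    intro u hu
    exact (hinvw_pos _ (hginv_nonneg u hu.1)).le
  have hA_mono : ∀ a b, 0 ≤ a → a ≤ b → A a ≤ A b := by
    intro a b ha hab
    have h1 : A b = A a + ∫ u in a..b, 1 / w (finv u) := hdiff _ hfint a b ha hab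
    have h2 := hlow _ hfI_anti a b ha hab
    have h3 : 0 ≤ (b - a) * (1 / w (finv b)) :=
      mul_nonneg (by linarith) (hinvw_pos _ (hfinv_nonneg b (ha.trans hab))).le
    linarith
  -- Part (i)
  have part1 : (∀ x, 0 ≤ x → f x ≤ g x) → ∀ x, 0 ≤ x → Hf x ≤ Hg x := by
    intro hfg x hx
    have hkey : ∀ u, 0 ≤ u → ginv u ≤ finv u := by
      intro u hu
      have h1 : u ≤ g (finv u) := by
        calc u = f (finv u) := (hfinv_right u hu).symm
        _ ≤ g (finv u) := hfg _ (hfinv_nonneg u hu)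
      calc ginv u ≤ ginv (g (finv u)) :=
            hginv_mono hu (hu.trans h1) h1
      _ = finv u := hginv_left _ (hfinv_nonneg u hu)
    have hAB : A x ≤ B x := by
      refine intervalIntegral.integral_mono_on hx (hfint 0 x le_rfl hx)
        (hgint 0 x le_rfl hx) ?_
      intro u hu
      exact one_div_le_one_div_of_le (hw_pos _ (hginv_nonneg u hu.1))
        (hw_mono (hginv_nonneg u hu.1) (hfinv_nonneg u hu.1) (hkey u hu.1))
    rw [hHf, hHg]
    exact hWinv_mono _ _ (hA_nonneg x hx) hAB
  refine ⟨part1, ?_⟩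
  -- Part (ii)
  intro hev hub
  -- threshold where f ≤ g
  obtain ⟨M₀, hM₀⟩ := eventually_atTop.mp hev
  set M : ℝ := max M₀ 0 with hM_def
  have hM_nonneg : (0:ℝ) ≤ M := le_max_right _ _
  have hfg : ∀ x, M ≤ x → f x ≤ g x := fun x hx => hM₀ x ((le_max_left _ _).trans hx)
  set U : ℝ := f M with hU_def
  have hU_nonneg : 0 ≤ U := by
    rw [hU_def, ← hf0]
    exact (hf_mono.le_iff_le Set.self_mem_Ici hM_nonneg).mpr hM_nonneg
  -- beyond U, ginv ≤ finv
  have hkey : ∀ u, U ≤ u → ginv u ≤ finv u := by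
    intro u hu
    have hu0 : 0 ≤ u := hU_nonneg.trans hu
    have hMfinv : M ≤ finv u := by
      have : f M ≤ f (finv u) := by rw [hfinv_right u hu0]; exact hu
      exact (hf_mono.le_iff_le hM_nonneg (hfinv_nonneg u hu0)).mp this
    have h1 : u ≤ g (finv u) := by
      calc u = f (finv u) := (hfinv_right u hu0).symm
      _ ≤ g (finv u) := hfg _ hMfinv
    calc ginv u ≤ ginv (g (finv u)) := hginv_mono hu0 (hu0.trans h1) h1
    _ = finv u := hginv_left _ (hfinv_nonneg u hu0)
  set C : ℝ := A U with hC_def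
  have hC_nonneg : 0 ≤ C := hA_nonneg U hU_nonneg
  -- A x ≤ B x + C for x ≥ U
  have hAB : ∀ x, U ≤ x → A x ≤ B x + C := by
    intro x hx
    have hx0 : 0 ≤ x := hU_nonneg.trans hx
    have h1 : A x = C + ∫ u in U..x, 1 / w (finv u) := hdiff _ hfint U x hU_nonneg hx
    have h2 : B x = B U + ∫ u in U..x, 1 / w (ginv u) := hdiff _ hgint U x hU_nonneg hx
    have h3 : (∫ u in U..x, 1 / w (finv u)) ≤ ∫ u in U..x, 1 / w (ginv u) := by
      refine intervalIntegral.integral_mono_on hx (hfint U x hU_nonneg hx0)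
        (hgint U x hU_nonneg hx0) ?_
      intro u hu
      have hu0 : 0 ≤ u := hU_nonneg.trans hu.1
      exact one_div_le_one_div_of_le (hw_pos _ (hginv_nonneg u hu0))
        (hw_mono (hginv_nonneg u hu0) (hfinv_nonneg u hu0) (hkey u hu.1))
    have h4 : 0 ≤ B U := hB_nonneg U hU_nonneg
    linarith
  -- Hf is monotone on [0,∞), hence tends to infinity
  have hHf_mono : ∀ a b, 0 ≤ a → a ≤ b → Hf a ≤ Hf b := by
    intro a b ha hab
    rw [hHf, hHf]
    exact hWinv_mono _ _ (hA_nonneg a ha) (hA_mono a b ha hab)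
  have hHf_inf : Tendsto Hf atTop atTop := by
    rw [tendsto_atTop]
    intro K
    obtain ⟨y, hy, hKy⟩ : ∃ y ∈ Hf '' Set.Ici 0, K < y := not_bddAbove_iff.mp hub K
    obtain ⟨x, hx, rfl⟩ := hy
    filter_upwards [eventually_ge_atTop x] with z hz
    exact le_of_lt (lt_of_lt_of_le hKy (hHf_mono x z hx hz))
  -- hence A, B tend to infinity
  have hA_inf : Tendsto A atTop atTop := by
    have h1 : Tendsto (fun x => W (Hf x)) atTop atTop := hW_inf.comp hHf_inf
    refine h1.congr' ?_
    filter_upwards [eventually_ge_atTop (0:ℝ)] with x hx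
    rw [hHf]
    exact hWinv_right _ (hA_nonneg x hx)
  have hB_inf : Tendsto B atTop atTop := by
    refine tendsto_atTop_mono' atTop ?_ (tendsto_atTop_add_const_right atTop (-C) hA_inf)
    filter_upwards [eventually_ge_atTop U] with x hx
    linarith [hAB x hx]
  have hWinv_inf : Tendsto Winv atTop atTop := by
    rw [tendsto_atTop]
    intro K
    have hK0 : (0:ℝ) ≤ max K 0 := le_max_right _ _
    have hWK : 0 ≤ W (max K 0) := by
      calc (0:ℝ) = W 0 := hW0.symm
      _ ≤ W (max K 0) := (hW_smono.le_iff_le Set.self_mem_Ici hK0).mpr hK0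
    filter_upwards [eventually_ge_atTop (W (max K 0))] with t ht
    calc K ≤ max K 0 := le_max_left _ _
    _ = Winv (W (max K 0)) := (hWinv_left _ hK0).symm
    _ ≤ Winv t := hWinv_mono _ _ hWK ht
  have hHg_inf : Tendsto Hg atTop atTop := by
    have h1 : Tendsto (fun x => Winv (B x)) atTop atTop := hWinv_inf.comp hB_inf
    exact h1.congr fun x => (hHg x).symm
  -- the main estimate
  refine le_of_forall_pos_le_add ?_
  intro ε hε
  have h1ε : (0:ℝ) < 1 + ε := by linarith
  set K : ℝ := C * (1 + ε) / ε with hK_def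
  have hMul : Tendsto (fun x => (1 + ε) * Hg x) atTop atTop := hHg_inf.const_mul_atTop h1ε
  have hEv : ∀ᶠ x in atTop, Hf x / Hg x ≤ 1 + ε := by
    filter_upwards [hHg_inf.eventually_ge_atTop 1,
      (hl_inf.comp hMul).eventually_ge_atTop K,
      eventually_ge_atTop U, eventually_ge_atTop (0:ℝ)] with x hHgx hl2 hxU hx0
    -- abbreviations
    set y : ℝ := Hg x with hy_def
    have hy1 : (1:ℝ) ≤ y := hHgx
    have hy0 : (0:ℝ) < y := lt_of_lt_of_le one_pos hy1
    have hyB : y = Winv (B x) := by rw [hy_def, hHg]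
    have hWy : W y = B x := by rw [hyB]; exact hWinv_right _ (hB_nonneg x hx0)
    have hy_nonneg : (0:ℝ) ≤ y := hy0.le
    -- let z = (1+ε) y
    set z : ℝ := (1 + ε) * y with hz_def
    have hyz : y ≤ z := by nlinarith
    have hz0 : (0:ℝ) < z := lt_of_lt_of_le hy0 hyz
    -- ℓ z is large
    have hlz : K ≤ ℓ z := hl2
    -- W z - W y ≥ C
    have hWzy : W y + C ≤ W z := by
      have h1 : W z = W y + ∫ u in y..z, 1 / w u := by
        rw [hW, hW, hdiff _ hwint y z hy_nonneg hyz]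
      have h2 := hlow _ hinvw_anti y z hy_nonneg hyz
      have h3 : (z - y) * (1 / w z) = ε * ℓ z / (1 + ε) := by
        rw [hwl z hz0, one_div_div, hz_def]
        field_simp
        ring
      have h4 : C ≤ ε * ℓ z / (1 + ε) := by
        rw [hK_def] at hlz
        rw [div_le_iff₀ hε] at hlz
        rw [le_div_iff₀ h1ε]
        nlinarith
      linarith
    -- conclude Hf x ≤ (1+ε) * Hg x
    have hHfx : Hf x ≤ z := by
      have h5 : A x ≤ W z := by
        have := hAB x hxU
        linarith [hWzy, hWy]
      rw [hHf]
      calc Winv (A x) ≤ Winv (W z) := hWinv_mono _ _ (hA_nonneg x hx0) h5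
      _ = z := hWinv_left _ hz0.le
    rw [div_le_iff₀ hy0]
    calc Hf x ≤ z := hHfx
    _ = (1 + ε) * y := rfl
  have hcb : IsCoboundedUnder (· ≤ ·) atTop (fun x => Hf x / Hg x) := by
    refine isCoboundedUnder_le_of_eventually_le atTop (x := 0) ?_
    filter_upwards [hHf_inf.eventually_ge_atTop 0, hHg_inf.eventually_ge_atTop 0]
      with x h1 h2
    exact div_nonneg h1 h2
  exact limsup_le_of_le hcb hEv
end
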